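/- arXiv:1106.0088 — 12 statements merged into one kernel-verified Lean document; each statement's English description precedes it below -/
import Mathlib

section
/- Let X be a finite-dimensional real normed space, let F ⊆ X be a closed, bounded, convex set with 0 in its interior, and let Ω, Ω_1, …, Ω_n (n ≥ 2) be nonempty closed subsets of X. If at least one of the sets Ω, Ω_1, …, Ω_n is bounded, then the generalized Heron problem admits an optimal solution, i.e., there exists x̄ ∈ Ω such that Σ_{i=1}^n T^F_{Ω_i}(x̄) ≤ Σ_{i=1}^n T^F_{Ω_i}(x) for all x ∈ Ω. -/
open Set Metric Bornology Pointwise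

/-- The minimal time function `T^F_Q(x) = inf {t ≥ 0 : Q ∩ (x + tF) ≠ ∅}`. -/
noncomputable def minTime {X : Type*} [NormedAddCommGroup X] [NormedSpace ℝ X]
    (F Q : Set X) (x : X) : ℝ :=
  sInf {t : ℝ | 0 ≤ t ∧ (Q ∩ ({x} + t • F)).Nonempty}

section Aux

variable {X : Type*} [NormedAddCommGroup X] [NormedSpace ℝ X]

lemma mem_singleton_add_iff {x q : X} {s : Set X} : q ∈ {x} + s ↔ q - x ∈ s := by
  rw [Set.singleton_add]
  constructor
  · rintro ⟨f, hf, rfl⟩; simpa using hf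
  · intro h; exact ⟨q - x, h, by simp⟩

lemma sub_mem_smul_of_norm_le {x q : X} {F : Set X} {r t : ℝ} (hr : 0 < r)
    (hrF : closedBall 0 r ⊆ F) (ht : ‖q - x‖ ≤ t * r) (htt : 0 ≤ t) :
    q - x ∈ t • F := by
  rcases eq_or_lt_of_le htt with h0 | h0
  · have : q - x = 0 := by
      have : ‖q - x‖ ≤ 0 := by nlinarith
      simpa [norm_le_zero_iff] using this
    rw [this, ← h0]
    exact ⟨0, hrF (by simp [hr.le]), by simp⟩
  · refine ⟨t⁻¹ • (q - x), hrF ?_, by simp [smul_smul, h0.ne']⟩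
    simp only [mem_closedBall, dist_zero_right, norm_smul, norm_inv, Real.norm_eq_abs,
      abs_of_pos h0]
    rw [inv_mul_le_iff₀ h0]
    linarith [ht]

/-- The set defining `minTime` is nonempty. -/
lemma minTime_set_nonempty {F Q : Set X} {r : ℝ} (hr : 0 < r) (hrF : closedBall 0 r ⊆ F)
    (hQ : Q.Nonempty) (x : X) :
    {t : ℝ | 0 ≤ t ∧ (Q ∩ ({x} + t • F)).Nonempty}.Nonempty := by
  obtain ⟨q, hq⟩ := hQ
  refine ⟨‖q - x‖ / r, div_nonneg (norm_nonneg _) hr.le, q, hq, ?_⟩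
  rw [mem_singleton_add_iff]
  exact sub_mem_smul_of_norm_le hr hrF (by rw [div_mul_cancel₀ _ hr.ne']) 
    (div_nonneg (norm_nonneg _) hr.le)

lemma minTime_nonneg {F Q : Set X} {r : ℝ} (hr : 0 < r) (hrF : closedBall 0 r ⊆ F)
    (hQ : Q.Nonempty) (x : X) : 0 ≤ minTime F Q x :=
  le_csInf (minTime_set_nonempty hr hrF hQ x) fun _ ht => ht.1

/-- One-sided Lipschitz estimate for `minTime`. -/
lemma minTime_le_add {F Q : Set X} {r : ℝ} (hr : 0 < r) (hrF : closedBall 0 r ⊆ F)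
    (hFconv : Convex ℝ F) (hQ : Q.Nonempty) (x y : X) :
    minTime F Q x ≤ minTime F Q y + ‖x - y‖ / r := by
  have hY := minTime_set_nonempty hr hrF hQ y
  have key : ∀ t ∈ {t : ℝ | 0 ≤ t ∧ (Q ∩ ({y} + t • F)).Nonempty},
      minTime F Q x ≤ t + ‖x - y‖ / r := by
    rintro t ⟨ht0, q, hqQ, hq⟩
    have hd : (0:ℝ) ≤ ‖x - y‖ / r := div_nonneg (norm_nonneg _) hr.le
    refine csInf_le ⟨0, fun s hs => hs.1⟩ ⟨by positivity, q, hqQ, ?_⟩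
    rw [mem_singleton_add_iff]
    rw [mem_singleton_add_iff] at hq
    have hsplit : (t + ‖x - y‖ / r) • F = t • F + (‖x - y‖ / r) • F :=
      hFconv.add_smul ht0 hd
    rw [hsplit]
    have h1 : q - x - (q - y) ∈ (‖x - y‖ / r) • F := by
      have : q - x - (q - y) = y - x := by abel
      rw [this]
      refine sub_mem_smul_of_norm_le hr hrF ?_ hd
      rw [div_mul_cancel₀ _ hr.ne', norm_sub_rev]
    exact ⟨q - y, hq, q - x - (q - y), h1, by abel⟩
  have h : minTime F Q x - ‖x - y‖ / r ≤ minTime F Q y :=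
    le_csInf hY fun t ht => by linarith [key t ht]
  linarith

lemma minTime_continuous {F Q : Set X} {r : ℝ} (hr : 0 < r) (hrF : closedBall 0 r ⊆ F)
    (hFconv : Convex ℝ F) (hQ : Q.Nonempty) : Continuous (minTime F Q) := by
  have : LipschitzWith (1 / r).toNNReal (minTime F Q) := by
    apply LipschitzWith.of_dist_le_mul
    intro x y
    rw [Real.dist_eq, Real.coe_toNNReal _ (by positivity)]
    rw [abs_sub_le_iff]
    constructor
    · have := minTime_le_add hr hrF hFconv hQ x y
      rw [← dist_eq_norm] at this
      rw [div_mul_eq_mul_div, one_mul]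
      linarith
    · have := minTime_le_add hr hrF hFconv hQ y x
      rw [← dist_eq_norm, dist_comm] at this
      rw [div_mul_eq_mul_div, one_mul]
      linarith
  exact this.continuous

/-- Coercivity estimate: if `Q ⊆ closedBall 0 M` and `F ⊆ closedBall 0 R`, then
`minTime F Q x ≥ (‖x‖ - M) / R`. -/
lemma le_minTime {F Q : Set X} {r R M : ℝ} (hr : 0 < r) (hrF : closedBall 0 r ⊆ F)
    (hQ : Q.Nonempty) (hR : 0 < R) (hFR : F ⊆ closedBall 0 R)
    (hQM : Q ⊆ closedBall 0 M) (x : X) :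
    (‖x‖ - M) / R ≤ minTime F Q x := by
  refine le_csInf (minTime_set_nonempty hr hrF hQ x) ?_
  rintro t ⟨ht0, q, hqQ, hq⟩
  rw [mem_singleton_add_iff] at hq
  obtain ⟨f, hfF, hf⟩ := hq
  have hfR : ‖f‖ ≤ R := by simpa [mem_closedBall, dist_zero_right] using hFR hfF
  have hqM : ‖q‖ ≤ M := by simpa [mem_closedBall, dist_zero_right] using hQM hqQ
  have hx : ‖x‖ ≤ M + t * R := by
    have h1 : ‖q - x‖ = t * ‖f‖ := by rw [← hf, norm_smul, Real.norm_eq_abs, abs_of_nonneg ht0]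
    have h2 : ‖x‖ ≤ ‖q‖ + ‖q - x‖ := by
      have := norm_sub_le q (q - x)
      simpa using this
    nlinarith [norm_nonneg f]
  rw [div_le_iff₀ hR]
  linarith

end Aux

/-- Existence of optimal solutions to the generalized Heron problem in a
finite-dimensional normed space when one of the sets `Ω, Ω_1, …, Ω_n` is bounded. -/
theorem heron_exists_of_finiteDimensional
    {X : Type*} [NormedAddCommGroup X] [NormedSpace ℝ X] [FiniteDimensional ℝ X]
    (F : Set X) (hFc : IsClosed F) (hFb : IsBounded F) (hFconv : Convex ℝ F)
    (hF0 : (0 : X) ∈ interior F)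
    (n : ℕ) (hn : 2 ≤ n)
    (Ω : Set X) (hΩne : Ω.Nonempty) (hΩc : IsClosed Ω)
    (Ωi : Fin n → Set X) (hΩine : ∀ i, (Ωi i).Nonempty) (hΩic : ∀ i, IsClosed (Ωi i))
    (hbdd : IsBounded Ω ∨ ∃ i, IsBounded (Ωi i)) :
    ∃ xbar ∈ Ω, ∀ x ∈ Ω, ∑ i, minTime F (Ωi i) xbar ≤ ∑ i, minTime F (Ωi i) x := by
  -- get a small closed ball inside F
  obtain ⟨ε, hε, hεF⟩ := Metric.mem_nhds_iff.mp (mem_interior_iff_mem_nhds.mp hF0)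
  set r := ε / 2 with hr_def
  have hr : 0 < r := by positivity
  have hrF : closedBall (0:X) r ⊆ F := fun z hz => hεF (by
    simp only [mem_closedBall, dist_zero_right] at hz
    simp only [mem_ball, dist_zero_right]
    linarith)
  -- continuity of the objective
  set T : X → ℝ := fun x => ∑ i, minTime F (Ωi i) x with hT_def
  have hTcont : Continuous T :=
    continuous_finset_sum _ fun i _ => minTime_continuous hr hrF hFconv (hΩine i)
  have hTnonneg : ∀ i (x : X), 0 ≤ minTime F (Ωi i) x :=
    fun i x => minTime_nonneg hr hrF (hΩine i) x
  rcases hbdd with hΩb | ⟨i, hib⟩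
  · -- Ω compact: direct minimization
    have hK : IsCompact Ω := Metric.isCompact_of_isClosed_isBounded hΩc hΩb
    obtain ⟨xbar, hxbar, hmin⟩ := hK.exists_isMinOn hΩne hTcont.continuousOn
    exact ⟨xbar, hxbar, fun x hx => hmin hx⟩
  · -- Ωi i bounded: coercivity
    obtain ⟨R, hFR⟩ := hFb.subset_closedBall 0
    set R' := max R 1 with hR'_def
    have hR' : 0 < R' := lt_of_lt_of_le one_pos (le_max_right _ _)
    have hFR' : F ⊆ closedBall 0 R' := hFR.trans (closedBall_subset_closedBall (le_max_left _ _))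
    obtain ⟨M, hQM⟩ := hib.subset_closedBall 0
    obtain ⟨x0, hx0⟩ := hΩne
    set c := T x0 with hc_def
    have hc0 : 0 ≤ c := Finset.sum_nonneg fun i _ => hTnonneg i x0
    set ρ := max ‖x0‖ (M + R' * c + 1) with hρ_def
    -- coercivity: ‖x‖ > ρ → T x > c
    have hcoer : ∀ x : X, ρ < ‖x‖ → c < T x := by
      intro x hx
      have h1 : (‖x‖ - M) / R' ≤ minTime F (Ωi i) x :=
        le_minTime hr hrF (hΩine i) hR' hFR' hQM x
      have h2 : minTime F (Ωi i) x ≤ T x :=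
        Finset.single_le_sum (fun j _ => hTnonneg j x) (Finset.mem_univ i)
      have h3 : M + R' * c + 1 < ‖x‖ := lt_of_le_of_lt (le_max_right _ _) hx
      have h4 : c < (‖x‖ - M) / R' := by
        rw [lt_div_iff₀ hR']
        nlinarith
      linarith
    set K := Ω ∩ closedBall 0 ρ with hK_def
    have hKc : IsCompact K :=
      Metric.isCompact_of_isClosed_isBounded (hΩc.inter isClosed_closedBall)
        (isBounded_closedBall.subset inter_subset_right)
    have hx0K : x0 ∈ K := ⟨hx0, by
      simp only [mem_closedBall, dist_zero_right]
      exact le_max_left _ _⟩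
    obtain ⟨xbar, hxbarK, hmin⟩ := hKc.exists_isMinOn ⟨x0, hx0K⟩ hTcont.continuousOn
    refine ⟨xbar, hxbarK.1, fun x hx => ?_⟩
    by_cases hxρ : ‖x‖ ≤ ρ
    · exact hmin ⟨hx, by simpa [mem_closedBall, dist_zero_right] using hxρ⟩
    · have h1 : c < T x := hcoer x (lt_of_not_ge hxρ)
      have h2 : T xbar ≤ c := hmin hx0K
      exact le_of_lt (lt_of_le_of_lt h2 h1)
end

section
/- Let X be a reflexive Banach space, let F ⊆ X be a closed, bounded, convex set with 0 in its interior, and let Ω, Ω_1, …, Ω_n (n ≥ 2) be nonempty closed convex subsets of X. If at least one of the sets Ω, Ω_1, …, Ω_n is bounded, then the generalized Heron problem admits an optimal solution, i.e., there exists x̄ ∈ Ω such that Σ_{i=1}^n T^F_{Ω_i}(x̄) ≤ Σ_{i=1}^n T^F_{Ω_i}(x) for all x ∈ Ω. -/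
open Set Metric Bornology Pointwise

namespace HeronAux

variable {X : Type*} [NormedAddCommGroup X] [NormedSpace ℝ X]

def TSet (F Q : Set X) (x : X) : Set ℝ :=
  {t : ℝ | 0 ≤ t ∧ (Q ∩ ({x} + t • F)).Nonempty}

lemma minTime_def (F Q : Set X) (x : X) : minTime F Q x = sInf (TSet F Q x) := rfl

lemma bddBelow_TSet (F Q : Set X) (x : X) : BddBelow (TSet F Q x) :=
  ⟨0, fun _ ht => ht.1⟩

lemma minTime_nonneg (F Q : Set X) (x : X) : 0 ≤ minTime F Q x :=
  Real.sInf_nonneg (fun _ ht => ht.1)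

lemma smul_mem_of_norm_lt {F : Set X} {r : ℝ} (hr : ball (0:X) r ⊆ F)
    {s : ℝ} (hs : 0 < s) {v : X} (hv : ‖v‖ < s * r) : v ∈ s • F := by
  refine ⟨s⁻¹ • v, hr ?_, by show s • s⁻¹ • v = v; rw [smul_smul, mul_inv_cancel₀ hs.ne', one_smul]⟩
  rw [mem_ball_zero_iff, norm_smul, norm_inv, Real.norm_of_nonneg hs.le]
  rw [inv_mul_lt_iff₀ hs]
  linarith [hv]

lemma mem_singleton_add {x q : X} {A : Set X} : q ∈ {x} + A ↔ q - x ∈ A := by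
  constructor
  · rintro ⟨a, rfl, w, hw, rfl⟩
    simpa using hw
  · intro h
    exact ⟨x, rfl, q - x, h, by show x + (q - x) = q; abel⟩

lemma mem_TSet (hr : ball (0:X) r ⊆ F) (hrpos : 0 < r) {Q : Set X} {q : X} (hq : q ∈ Q)
    {x : X} {t : ℝ} (ht : ‖q - x‖ / r < t) : t ∈ TSet F Q x := by
  have htpos : 0 < t := lt_of_le_of_lt (div_nonneg (norm_nonneg _) hrpos.le) ht
  refine ⟨htpos.le, q, hq, mem_singleton_add.2 ?_⟩
  exact smul_mem_of_norm_lt hr htpos ((div_lt_iff₀ hrpos).1 ht)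

lemma TSet_nonempty (hr : ball (0:X) r ⊆ F) (hrpos : 0 < r) {Q : Set X} (hQ : Q.Nonempty)
    (x : X) : (TSet F Q x).Nonempty := by
  obtain ⟨q, hq⟩ := hQ
  exact ⟨‖q - x‖ / r + 1, mem_TSet hr hrpos hq (by linarith)⟩

lemma minTime_le {F Q : Set X} {x : X} {t : ℝ} (ht : t ∈ TSet F Q x) : minTime F Q x ≤ t :=
  csInf_le (bddBelow_TSet F Q x) ht

/-- Lower estimate on the minimal time function by the distance. -/
lemma infDist_le_mul (hR : F ⊆ closedBall (0:X) R) (hr : ball (0:X) r ⊆ F) (hrpos : 0 < r)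
    {Q : Set X} (hQ : Q.Nonempty) (x : X) :
    infDist x Q ≤ R * minTime F Q x := by
  have h0F : (0:X) ∈ F := hr (by simpa using hrpos)
  have hR0 : 0 ≤ R := by simpa using mem_closedBall_zero_iff.1 (hR h0F)
  have key : ∀ t ∈ TSet F Q x, infDist x Q ≤ R * t := by
    rintro t ⟨ht0, q, hq, hmem⟩
    obtain ⟨f, hf, hfq⟩ := mem_singleton_add.1 hmem
    have hfq' : t • f = q - x := hfq
    have hdq : dist x q ≤ t * R := by
      rw [dist_eq_norm, ← neg_sub q x, norm_neg, ← hfq', norm_smul,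
        Real.norm_of_nonneg ht0]
      exact mul_le_mul_of_nonneg_left (mem_closedBall_zero_iff.1 (hR hf)) ht0
    calc infDist x Q ≤ dist x q := infDist_le_dist_of_mem hq
      _ ≤ t * R := hdq
      _ = R * t := mul_comm _ _
  rcases eq_or_lt_of_le hR0 with hR0' | hR0'
  · obtain ⟨t, ht⟩ := TSet_nonempty hr hrpos hQ x
    have := key t ht
    rw [← hR0'] at this ⊢
    simpa using this
  · have h2 : ∀ t ∈ TSet F Q x, infDist x Q / R ≤ t := fun t ht =>
      (div_le_iff₀' hR0').2 (key t ht)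
    have := le_csInf (TSet_nonempty hr hrpos hQ x) h2
    rw [div_le_iff₀' hR0'] at this
    exact this

/-- The key translation estimate: `T(x) ≤ T(y) + ‖x - y‖ / r`. -/
lemma minTime_le_add (hFconv : Convex ℝ F) (hr : ball (0:X) r ⊆ F) (hrpos : 0 < r)
    {Q : Set X} (hQ : Q.Nonempty) (x y : X) :
    minTime F Q x ≤ minTime F Q y + ‖x - y‖ / r := by
  refine le_of_forall_pos_le_add (fun ε hε => ?_)
  obtain ⟨t, ht, htlt⟩ := Real.lt_sInf_add_pos (TSet_nonempty hr hrpos hQ y) (half_pos hε)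
  obtain ⟨ht0, q, hq, hmem⟩ := ht
  obtain ⟨f, hf, hfq⟩ := mem_singleton_add.1 hmem
  have hfq' : t • f = q - y := hfq
  set s : ℝ := ‖x - y‖ / r + ε / 2 with hs
  have hspos : 0 < s := by positivity
  have hyx : y - x ∈ s • F := by
    apply smul_mem_of_norm_lt hr hspos
    rw [← norm_neg, neg_sub]
    rw [hs, add_mul, div_mul_cancel₀ _ hrpos.ne']
    nlinarith [norm_nonneg (x - y)]
  have hmem' : (s + t) ∈ TSet F Q x := by
    refine ⟨by positivity, q, hq, mem_singleton_add.2 ?_⟩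
    rw [hFconv.add_smul hspos.le ht0]
    exact ⟨y - x, hyx, t • f, ⟨f, hf, rfl⟩, by rw [hfq']; abel⟩
  have := minTime_le hmem'
  rw [minTime_def, minTime_def]
  calc sInf (TSet F Q x) ≤ s + t := this
    _ ≤ s + (sInf (TSet F Q y) + ε/2) := by linarith
    _ = sInf (TSet F Q y) + ‖x - y‖ / r + ε := by rw [hs]; ring

lemma lipschitz_minTime (hFconv : Convex ℝ F) (hr : ball (0:X) r ⊆ F) (hrpos : 0 < r)
    {Q : Set X} (hQ : Q.Nonempty) :
    LipschitzWith (Real.toNNReal (1/r)) (minTime F Q) := by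
  apply LipschitzWith.of_dist_le_mul
  intro x y
  have hc : ((Real.toNNReal (1/r) : NNReal) : ℝ) = 1/r := Real.coe_toNNReal _ (by positivity)
  rw [Real.dist_eq, abs_sub_le_iff, hc]
  have hxy : dist x y = ‖x - y‖ := dist_eq_norm x y
  have hyx : dist x y = ‖y - x‖ := by rw [dist_comm]; exact dist_eq_norm y x
  constructor
  · have := minTime_le_add hFconv hr hrpos hQ x y
    rw [hxy]
    have : ‖x - y‖ / r = 1 / r * ‖x - y‖ := by ring
    linarith [minTime_le_add hFconv hr hrpos hQ x y, this ▸ minTime_le_add hFconv hr hrpos hQ x y]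
  · rw [hyx]
    have h := minTime_le_add hFconv hr hrpos hQ y x
    have : ‖y - x‖ / r = 1 / r * ‖y - x‖ := by ring
    linarith

lemma continuous_minTime (hFconv : Convex ℝ F) (hr : ball (0:X) r ⊆ F) (hrpos : 0 < r)
    {Q : Set X} (hQ : Q.Nonempty) : Continuous (minTime F Q) :=
  (lipschitz_minTime hFconv hr hrpos hQ).continuous

lemma convexOn_minTime (hFconv : Convex ℝ F) (hr : ball (0:X) r ⊆ F) (hrpos : 0 < r)
    {Q : Set X} (hQconv : Convex ℝ Q) (hQ : Q.Nonempty) :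
    ConvexOn ℝ univ (minTime F Q) := by
  refine ⟨convex_univ, fun x _ y _ a b ha hb hab => ?_⟩
  refine le_of_forall_pos_le_add (fun ε hε => ?_)
  obtain ⟨t1, ht1, ht1lt⟩ := Real.lt_sInf_add_pos (TSet_nonempty hr hrpos hQ x) hε
  obtain ⟨t2, ht2, ht2lt⟩ := Real.lt_sInf_add_pos (TSet_nonempty hr hrpos hQ y) hε
  obtain ⟨ht10, q1, hq1, hmem1⟩ := ht1
  obtain ⟨ht20, q2, hq2, hmem2⟩ := ht2
  obtain ⟨f1, hf1, hfq1⟩ := mem_singleton_add.1 hmem1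
  obtain ⟨f2, hf2, hfq2⟩ := mem_singleton_add.1 hmem2
  have hfq1' : t1 • f1 = q1 - x := hfq1
  have hfq2' : t2 • f2 = q2 - y := hfq2
  have hmem' : a * t1 + b * t2 ∈ TSet F Q (a • x + b • y) := by
    refine ⟨by positivity, a • q1 + b • q2, hQconv hq1 hq2 ha hb hab, mem_singleton_add.2 ?_⟩
    rw [hFconv.add_smul (by positivity) (by positivity)]
    refine ⟨(a * t1) • f1, ⟨f1, hf1, rfl⟩, (b * t2) • f2, ⟨f2, hf2, rfl⟩, ?_⟩
    rw [mul_smul, mul_smul, hfq1', hfq2']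
    rw [smul_sub, smul_sub]
    abel
  have := minTime_le hmem'
  simp only [minTime_def, smul_eq_mul]
  calc sInf (TSet F Q (a • x + b • y)) ≤ a * t1 + b * t2 := this
    _ ≤ a * (sInf (TSet F Q x) + ε) + b * (sInf (TSet F Q y) + ε) := by
        apply add_le_add
        · exact mul_le_mul_of_nonneg_left ht1lt.le ha
        · exact mul_le_mul_of_nonneg_left ht2lt.le hb
    _ = a * sInf (TSet F Q x) + b * sInf (TSet F Q y) + ε := by
        rw [mul_add, mul_add]
        have : a * ε + b * ε = ε := by rw [← add_mul, hab, one_mul]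
        linarith

section Weak

variable {X : Type*} [NormedAddCommGroup X] [NormedSpace ℝ X]

open NormedSpace

lemma J_injective : Function.Injective (inclusionInDoubleDual ℝ X) := by
  have : Function.Injective (inclusionInDoubleDualLi ℝ (E := X)) :=
    (inclusionInDoubleDualLi ℝ (E := X)).injective
  exact this

/-- The inverse of the double-dual embedding, as a map from the weak-star double dual
to the weak space, is continuous. -/
lemma continuous_weak_inverse (hrefl : Function.Surjective (inclusionInDoubleDual ℝ X)) :
    Continuous (fun ψ : WeakDual ℝ (StrongDual ℝ X) =>
      (toWeakSpace ℝ X (Function.surjInv hrefl (WeakDual.toStrongDual ψ)))) := by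
  apply WeakBilin.continuous_of_continuous_eval
  intro f
  have hEq : (fun ψ : WeakDual ℝ (StrongDual ℝ X) =>
      ((topDualPairing ℝ X).flip
        (toWeakSpace ℝ X (Function.surjInv hrefl (WeakDual.toStrongDual ψ)))) f)
      = fun ψ : WeakDual ℝ (StrongDual ℝ X) => (topDualPairing ℝ (StrongDual ℝ X)) ψ f := by
    funext ψ
    have h1 : inclusionInDoubleDual ℝ X (Function.surjInv hrefl (WeakDual.toStrongDual ψ))
        = WeakDual.toStrongDual ψ := Function.rightInverse_surjInv hrefl _
    have := congrArg (fun g => g f) h1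
    simp at this
    exact this
  rw [hEq]
  exact WeakBilin.eval_continuous _ f

/-- In a reflexive space, the image in the weak space of a closed bounded convex set
is compact. -/
lemma isCompact_toWeakSpace (hrefl : Function.Surjective (inclusionInDoubleDual ℝ X))
    {S : Set X} (hSc : IsClosed S) (hSconv : Convex ℝ S) (hSb : IsBounded S) :
    IsCompact (toWeakSpace ℝ X '' S) := by
  obtain ⟨R, hR⟩ := (isBounded_iff_subset_closedBall (0:X)).1 hSb
  set g : WeakDual ℝ (StrongDual ℝ X) → WeakSpace ℝ X :=
    fun ψ => toWeakSpace ℝ X (Function.surjInv hrefl (WeakDual.toStrongDual ψ)) with hg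
  have hgc : Continuous g := continuous_weak_inverse hrefl
  have hcomp : IsCompact (g '' (WeakDual.toStrongDual ⁻¹' closedBall 0 R)) :=
    (WeakDual.isCompact_closedBall (𝕜 := ℝ) (E := StrongDual ℝ X) 0 R).image hgc
  have hclosed : IsClosed (toWeakSpace ℝ X '' S) := by
    have h := hSconv.toWeakSpace_closure (𝕜 := ℝ)
    rw [hSc.closure_eq] at h
    rw [h]
    exact isClosed_closure
  refine IsCompact.of_isClosed_subset hcomp hclosed ?_
  rintro - ⟨x, hx, rfl⟩
  refine ⟨StrongDual.toWeakDual (inclusionInDoubleDual ℝ X x), ?_, ?_⟩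
  · simp only [mem_preimage]
    have heq : WeakDual.toStrongDual (StrongDual.toWeakDual (inclusionInDoubleDual ℝ X x))
        = inclusionInDoubleDual ℝ X x := rfl
    rw [heq]
    have hx' : ‖x‖ ≤ R := mem_closedBall_zero_iff.1 (hR hx)
    exact (mem_closedBall_zero_iff (E := StrongDual ℝ (StrongDual ℝ X))).2
      (le_trans (double_dual_bound ℝ X x) hx')
  · show toWeakSpace ℝ X (Function.surjInv hrefl _) = toWeakSpace ℝ X x
    exact congrArg _ (J_injective (Function.rightInverse_surjInv hrefl _))

/-- A continuous convex function attains its minimum on a nonempty closed bounded convex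
subset of a reflexive Banach space. -/
lemma exists_min_on_closed_bounded_convex
    (hrefl : Function.Surjective (inclusionInDoubleDual ℝ X))
    {S : Set X} (hne : S.Nonempty) (hSc : IsClosed S) (hSconv : Convex ℝ S)
    (hSb : IsBounded S) {f : X → ℝ} (hf : Continuous f) (hfconv : ConvexOn ℝ univ f) :
    ∃ xbar ∈ S, ∀ x ∈ S, f xbar ≤ f x := by
  haveI : Nonempty S := hne.to_subtype
  set K : S → Set X := fun y => S ∩ {x | f x ≤ f (y:X)} with hK
  have hKsub : ∀ y, K y ⊆ S := fun y => inter_subset_left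
  have hKne : ∀ y : S, (K y).Nonempty := fun y => ⟨(y:X), y.2, show f (y:X) ≤ f (y:X) from le_rfl⟩
  have hKclosed : ∀ y : S, IsClosed (K y) :=
    fun y => hSc.inter (isClosed_le hf continuous_const)
  have hKconv : ∀ y : S, Convex ℝ (K y) := by
    intro y
    refine hSconv.inter ?_
    have := hfconv.convex_le (f (y:X))
    simpa using this
  have hKbdd : ∀ y : S, IsBounded (K y) := fun y => hSb.subset (hKsub y)
  set Z : S → Set (WeakSpace ℝ X) := fun y => toWeakSpace ℝ X '' (K y) with hZ
  have hZne : ∀ y, (Z y).Nonempty := fun y => (hKne y).image _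
  have hZcompact : ∀ y, IsCompact (Z y) :=
    fun y => isCompact_toWeakSpace hrefl (hKclosed y) (hKconv y) (hKbdd y)
  have hZclosed : ∀ y, IsClosed (Z y) := by
    intro y
    have h := (hKconv y).toWeakSpace_closure (𝕜 := ℝ)
    rw [(hKclosed y).closure_eq] at h
    show IsClosed (toWeakSpace ℝ X '' K y)
    rw [h]
    exact isClosed_closure
  have hdir : Directed (· ⊇ ·) Z := by
    intro y z
    rcases le_total (f (y:X)) (f (z:X)) with h | h
    · exact ⟨y, subset_refl _, image_mono (fun x hx => ⟨hx.1, le_trans hx.2 h⟩)⟩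
    · exact ⟨z, image_mono (fun x hx => ⟨hx.1, le_trans hx.2 h⟩), subset_refl _⟩
  obtain ⟨w, hw⟩ := IsCompact.nonempty_iInter_of_directed_nonempty_isCompact_isClosed
    Z hdir hZne hZcompact hZclosed
  rw [mem_iInter] at hw
  obtain ⟨y0⟩ := (inferInstance : Nonempty S)
  obtain ⟨xbar, hxbarK, hxbarw⟩ := hw y0
  refine ⟨xbar, hxbarK.1, fun x hx => ?_⟩
  have := hw ⟨x, hx⟩
  obtain ⟨x', hx'K, hx'w⟩ := this
  have hxx : x' = xbar := by
    have : toWeakSpace ℝ X x' = toWeakSpace ℝ X xbar := by rw [hx'w, hxbarw]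
    exact (toWeakSpace ℝ X).injective this
  rw [← hxx]
  exact hx'K.2

end Weak

lemma convexOn_finset_sum {X : Type*} [NormedAddCommGroup X] [NormedSpace ℝ X]
    {ι : Type*} (t : Finset ι) (g : ι → X → ℝ)
    (h : ∀ i ∈ t, ConvexOn ℝ univ (g i)) :
    ConvexOn ℝ univ (fun x => ∑ i ∈ t, g i x) := by
  classical
  induction t using Finset.induction_on with
  | empty => simpa using convexOn_const (0:ℝ) convex_univ
  | insert a s' hnotmem ih =>
    simp only [Finset.sum_insert hnotmem]
    exact (h a (Finset.mem_insert_self a s')).add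
      (ih (fun i hi => h i (Finset.mem_insert_of_mem hi)))

end HeronAux


/-- Existence of optimal solutions to the generalized Heron problem in a reflexive
Banach space with convex data when one of the sets `Ω, Ω_1, …, Ω_n` is bounded.
Reflexivity is expressed as surjectivity of the canonical embedding into the double dual. -/
theorem heron_exists_of_reflexive
    {X : Type*} [NormedAddCommGroup X] [NormedSpace ℝ X] [CompleteSpace X]
    (hrefl : Function.Surjective (NormedSpace.inclusionInDoubleDual ℝ X))
    (F : Set X) (hFc : IsClosed F) (hFb : IsBounded F) (hFconv : Convex ℝ F)
    (hF0 : (0 : X) ∈ interior F)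
    (n : ℕ) (hn : 2 ≤ n)
    (Ω : Set X) (hΩne : Ω.Nonempty) (hΩc : IsClosed Ω) (hΩconv : Convex ℝ Ω)
    (Ωi : Fin n → Set X) (hΩine : ∀ i, (Ωi i).Nonempty) (hΩic : ∀ i, IsClosed (Ωi i))
    (hΩiconv : ∀ i, Convex ℝ (Ωi i))
    (hbdd : IsBounded Ω ∨ ∃ i, IsBounded (Ωi i)) :
    ∃ xbar ∈ Ω, ∀ x ∈ Ω, ∑ i, minTime F (Ωi i) xbar ≤ ∑ i, minTime F (Ωi i) x := by
  classical
  obtain ⟨r, hrpos, hr⟩ := Metric.mem_nhds_iff.1 (mem_interior_iff_mem_nhds.1 hF0)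
  obtain ⟨R, hR⟩ := (isBounded_iff_subset_closedBall (0:X)).1 hFb
  have hR0 : 0 ≤ R := by
    simpa using mem_closedBall_zero_iff.1 (hR (hr (mem_ball_zero_iff.2 (show ‖(0:X)‖ < r by simpa using hrpos))))
  set f : X → ℝ := fun x => ∑ i, minTime F (Ωi i) x with hf
  have hfcont : Continuous f := by
    apply continuous_finset_sum
    intro i _
    exact HeronAux.continuous_minTime hFconv hr hrpos (hΩine i)
  have hfconv : ConvexOn ℝ univ f :=
    HeronAux.convexOn_finset_sum _ _
      (fun i _ => HeronAux.convexOn_minTime hFconv hr hrpos (hΩiconv i) (hΩine i))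
  obtain ⟨x0, hx0⟩ := hΩne
  set S : Set X := Ω ∩ {x | f x ≤ f x0} with hS
  have hSne : S.Nonempty := ⟨x0, hx0, show f x0 ≤ f x0 from le_rfl⟩
  have hSc : IsClosed S := hΩc.inter (isClosed_le hfcont continuous_const)
  have hSconv : Convex ℝ S := by
    refine hΩconv.inter ?_
    simpa using hfconv.convex_le (f x0)
  have hSb : IsBounded S := by
    rcases hbdd with hΩb | ⟨i0, hi0b⟩
    · exact hΩb.subset inter_subset_left
    · obtain ⟨M, hM⟩ := (isBounded_iff_subset_closedBall (0:X)).1 hi0b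
      rw [isBounded_iff_subset_closedBall (0:X)]
      refine ⟨M + (R * f x0 + 1), fun x hx => ?_⟩
      have h1 : minTime F (Ωi i0) x ≤ f x := by
        rw [hf]
        exact Finset.single_le_sum
          (fun i _ => HeronAux.minTime_nonneg F (Ωi i) x) (Finset.mem_univ i0)
      have h2 : infDist x (Ωi i0) ≤ R * f x0 := by
        calc infDist x (Ωi i0) ≤ R * minTime F (Ωi i0) x :=
              HeronAux.infDist_le_mul hR hr hrpos (hΩine i0) x
          _ ≤ R * f x := mul_le_mul_of_nonneg_left h1 hR0
          _ ≤ R * f x0 := mul_le_mul_of_nonneg_left hx.2 hR0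
      have h3 : infDist x (Ωi i0) < R * f x0 + 1 := by linarith
      obtain ⟨q, hq, hdq⟩ := (infDist_lt_iff (hΩine i0)).1 h3
      have hqM : ‖q‖ ≤ M := mem_closedBall_zero_iff.1 (hM hq)
      rw [mem_closedBall_zero_iff]
      calc ‖x‖ ≤ ‖q‖ + dist x q := by
            rw [dist_eq_norm]
            have h := norm_add_le (x - q) q
            simp only [sub_add_cancel] at h
            linarith
        _ ≤ M + (R * f x0 + 1) := add_le_add hqM hdq.le
  obtain ⟨xbar, hxbarS, hxbar⟩ :=
    HeronAux.exists_min_on_closed_bounded_convex hrefl hSne hSc hSconv hSb hfcont hfconv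
  refine ⟨xbar, hxbarS.1, fun x hx => ?_⟩
  by_cases hcase : f x ≤ f x0
  · exact hxbar x ⟨hx, hcase⟩
  · push_neg at hcase
    have := hxbar x0 ⟨hx0, show f x0 ≤ f x0 from le_rfl⟩
    calc f xbar ≤ f x0 := this
      _ ≤ f x := hcase.le
end

section
/- Let X be a reflexive Banach space, let F ⊆ X be a closed, bounded, convex set with 0 in its interior, and let Q ⊆ X be a nonempty closed convex set. Then for every x ∈ X the generalized projection of x onto Q is nonempty: Q ∩ (x + T^F_Q(x)·F) ≠ ∅. -/
open Set Metric Bornology Pointwise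

namespace GenProjAux

open NormedSpace

variable {X : Type*} [NormedAddCommGroup X] [NormedSpace ℝ X]

lemma mazur {s : Set X} (hs : Convex ℝ s) (hc : IsClosed s) :
    IsClosed (toWeakSpace ℝ X '' s) := by
  rw [← hc.closure_eq, hs.toWeakSpace_closure ℝ]
  exact isClosed_closure

lemma e_cont (hrefl : Function.Surjective (inclusionInDoubleDual ℝ X)) :
    Continuous (fun y : WeakDual ℝ (StrongDual ℝ X) =>
      toWeakSpace ℝ X (Function.invFun (inclusionInDoubleDual ℝ X) y)) := by
  apply WeakBilin.continuous_of_continuous_eval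
  intro f
  have key : (fun y : WeakDual ℝ (StrongDual ℝ X) =>
      (topDualPairing ℝ X).flip
        (toWeakSpace ℝ X (Function.invFun (inclusionInDoubleDual ℝ X) y)) f)
      = fun y : WeakDual ℝ (StrongDual ℝ X) => topDualPairing ℝ (StrongDual ℝ X) y f := by
    funext y
    show f (Function.invFun (inclusionInDoubleDual ℝ X) y) = y f
    conv_rhs => rw [← Function.rightInverse_invFun hrefl y]
    rfl
  rw [key]
  exact WeakBilin.eval_continuous _ f

lemma weak_compact (hrefl : Function.Surjective (inclusionInDoubleDual ℝ X))
    {s : Set X} (hs : Convex ℝ s) (hc : IsClosed s) (hb : IsBounded s) :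
    IsCompact {y : WeakDual ℝ (StrongDual ℝ X) | ∃ z ∈ s, inclusionInDoubleDual ℝ X z = y} := by
  set J := inclusionInDoubleDual ℝ X with hJ
  have Jinj : Function.Injective J := (inclusionInDoubleDualLi ℝ (E := X)).injective
  obtain ⟨R, hR⟩ := hb.subset_closedBall 0
  set C : Set (WeakDual ℝ (StrongDual ℝ X)) := {y | ∃ z ∈ s, J z = y} with hC
  have hclosed : IsClosed C := by
    have him : C = (fun y : WeakDual ℝ (StrongDual ℝ X) =>
            toWeakSpace ℝ X (Function.invFun J y)) ⁻¹' (toWeakSpace ℝ X '' s) := by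
      ext y
      constructor
      · rintro ⟨z, hz, rfl⟩
        exact ⟨z, hz, congrArg _ (Function.leftInverse_invFun Jinj z).symm⟩
      · rintro ⟨z, hz, hzy⟩
        have h1 : Function.invFun J y = z := (toWeakSpace ℝ X).injective hzy.symm
        exact ⟨z, hz, by rw [← h1, Function.rightInverse_invFun hrefl y]⟩
    rw [him]
    exact (mazur hs hc).preimage (e_cont hrefl)
  have hsub : C ⊆ WeakDual.toStrongDual ⁻¹' closedBall 0 R := by
    rintro - ⟨z, hz, rfl⟩
    have : ‖J z‖ ≤ R := by
      rw [show ‖J z‖ = ‖z‖ from (inclusionInDoubleDualLi ℝ (E := X)).norm_map z]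
      simpa using hR hz
    show dist (J z) (0 : StrongDual ℝ (StrongDual ℝ X)) ≤ R
    exact (@dist_zero_right (StrongDual ℝ (StrongDual ℝ X)) _ (J z)).trans_le this
  exact (WeakDual.isCompact_closedBall (0 : StrongDual ℝ (StrongDual ℝ X)) R).of_isClosed_subset
    hclosed hsub

lemma smul_mono {F : Set X} (hFconv : Convex ℝ F) (hF0 : (0 : X) ∈ F)
    {s t : ℝ} (h0 : 0 ≤ s) (hst : s ≤ t) : s • F ⊆ t • F := by
  rcases eq_or_lt_of_le (h0.trans hst) with ht | ht
  · have hs0 : s = 0 := le_antisymm (hst.trans ht.symm.le) h0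
    rw [hs0, ← ht]
  · rintro y ⟨f, hf, rfl⟩
    refine ⟨(s / t) • f, ?_, ?_⟩
    · have := hFconv hf hF0 (div_nonneg h0 ht.le)
        (sub_nonneg.2 ((div_le_one ht).2 hst)) (by ring)
      simpa using this
    · show t • ((s / t) • f) = s • f
      rw [smul_smul, mul_div_cancel₀ _ ht.ne']

lemma mem_singleton_add {s : Set X} (x z : X) : z ∈ {x} + s ↔ z - x ∈ s := by
  simp [Set.singleton_add, Set.mem_image, eq_comm, sub_eq_iff_eq_add', neg_add_eq_sub]

end GenProjAux

/-- In a reflexive Banach space, the generalized projection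
`Π^F_Q(x) = Q ∩ (x + T^F_Q(x)·F)` onto a nonempty closed convex set `Q` is nonempty. -/
theorem generalizedProjection_nonempty_of_reflexive
    {X : Type*} [NormedAddCommGroup X] [NormedSpace ℝ X] [CompleteSpace X]
    (hrefl : Function.Surjective (NormedSpace.inclusionInDoubleDual ℝ X))
    (F : Set X) (hFc : IsClosed F) (hFb : IsBounded F) (hFconv : Convex ℝ F)
    (hF0 : (0 : X) ∈ interior F)
    (Q : Set X) (hQne : Q.Nonempty) (hQc : IsClosed Q) (hQconv : Convex ℝ Q) (x : X) :
    (Q ∩ ({x} + minTime F Q x • F)).Nonempty := by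
  classical
  open GenProjAux NormedSpace in
  set A : Set ℝ := {t : ℝ | 0 ≤ t ∧ (Q ∩ ({x} + t • F)).Nonempty} with hA
  have hF0mem : (0 : X) ∈ F := interior_subset hF0
  -- A is nonempty
  obtain ⟨q, hq⟩ := hQne
  obtain ⟨ε, hε, hball⟩ := Metric.isOpen_iff.1 isOpen_interior 0 hF0
  have hAne : A.Nonempty := by
    refine ⟨(‖q - x‖ + 1) / ε, ⟨by positivity, q, hq, ?_⟩⟩
    rw [GenProjAux.mem_singleton_add]
    set t : ℝ := (‖q - x‖ + 1) / ε with hts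
    have ht : 0 < t := by positivity
    refine ⟨t⁻¹ • (q - x), ?_, show t • (t⁻¹ • (q - x)) = q - x by
      rw [smul_smul, mul_inv_cancel₀ ht.ne', one_smul]⟩
    refine interior_subset (hball ?_)
    rw [mem_ball, dist_zero_right, norm_smul, norm_inv, Real.norm_of_nonneg ht.le]
    rw [hts, inv_div, div_mul_eq_mul_div]
    rw [div_lt_iff₀ (by positivity)]
    nlinarith [norm_nonneg (q - x), hε]
  have hAbdd : BddBelow A := ⟨0, fun t ht => ht.1⟩
  set T : ℝ := minTime F Q x with hTdef
  have hT : T = sInf A := rfl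
  have hTnn : 0 ≤ T := by
    rw [hT]; exact le_csInf hAne fun t ht => ht.1
  have hAmem : ∀ t, T < t → t ∈ A := by
    intro t ht
    obtain ⟨s, hsA, hst⟩ := exists_lt_of_csInf_lt hAne (hT ▸ ht)
    obtain ⟨z, hzQ, hzF⟩ := hsA.2
    refine ⟨hsA.1.trans hst.le, z, hzQ, ?_⟩
    rw [GenProjAux.mem_singleton_add] at hzF ⊢
    exact GenProjAux.smul_mono hFconv hF0mem hsA.1 hst.le hzF
  -- the sequence of sets
  set t : ℕ → ℝ := fun n => T + 1 / (n + 1) with htdef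
  have htpos : ∀ n, T < t n := fun n => by
    have : (0:ℝ) < 1 / (n + 1) := by positivity
    simp only [htdef]; linarith
  have hS : ∀ n : ℕ, (Q ∩ ({x} + t n • F)).Nonempty := fun n => (hAmem _ (htpos n)).2
  set S : ℕ → Set X := fun n => Q ∩ ({x} + t n • F) with hSdef
  have hSconv : ∀ n, Convex ℝ (S n) :=
    fun n => hQconv.inter ((convex_singleton x).add ((hFconv.smul _)))
  have hSclosed : ∀ n, IsClosed (S n) := by
    intro n
    refine hQc.inter ?_
    rw [Set.singleton_add]
    exact (Homeomorph.addLeft x).isClosedMap _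
      ((hFc.smul_of_ne_zero (by positivity : (0:ℝ) < t n).ne'))
  have hSbdd : ∀ n, IsBounded (S n) := by
    intro n
    refine (IsBounded.add isBounded_singleton ?_).subset inter_subset_right
    rw [show t n • F = (t n • ·) '' F from rfl]
    exact (lipschitzWith_smul (t n)).isBounded_image hFb
  have hSanti : ∀ m n : ℕ, m ≤ n → S n ⊆ S m := by
    intro m n hmn
    apply inter_subset_inter_right
    intro z hz
    rw [GenProjAux.mem_singleton_add] at hz ⊢
    refine GenProjAux.smul_mono hFconv hF0mem (le_of_lt ?_) ?_ hz
    · exact lt_of_le_of_lt hTnn (htpos n)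
    · have : (1:ℝ) / (n + 1) ≤ 1 / (m + 1) := by
        apply one_div_le_one_div_of_le (by positivity)
        exact_mod_cast by omega
      simp only [htdef]; linarith
  -- move into the bidual
  set J := inclusionInDoubleDual ℝ X with hJ
  have Jinj : Function.Injective J := (inclusionInDoubleDualLi ℝ (E := X)).injective
  set C : ℕ → Set (WeakDual ℝ (StrongDual ℝ X)) :=
    fun n => {y | ∃ z ∈ S n, J z = y} with hCdef
  have hCcpt : ∀ n, IsCompact (C n) :=
    fun n => GenProjAux.weak_compact hrefl (hSconv n) (hSclosed n) (hSbdd n)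
  have hCne : ∀ n, (C n).Nonempty := fun n => by
    obtain ⟨z, hz⟩ := hS n; exact ⟨J z, z, hz, rfl⟩
  have hCdir : Directed (· ⊇ ·) C := by
    intro m n
    refine ⟨max m n, ?_, ?_⟩
    · rintro - ⟨z, hz, rfl⟩; exact ⟨z, hSanti m _ (le_max_left m n) hz, rfl⟩
    · rintro - ⟨z, hz, rfl⟩; exact ⟨z, hSanti n _ (le_max_right m n) hz, rfl⟩
  obtain ⟨y, hy⟩ := IsCompact.nonempty_iInter_of_directed_nonempty_isCompact_isClosed
    C hCdir hCne hCcpt (fun n => (hCcpt n).isClosed)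
  -- extract the common point
  have hz : ∀ n, Function.invFun J y ∈ S n := by
    intro n
    have := (Set.mem_iInter.1 hy) n
    obtain ⟨z, hzS, hzy⟩ := this
    have : Function.invFun J y = z := by
      rw [← hzy, Function.leftInverse_invFun Jinj z]
    rw [this]; exact hzS
  set z := Function.invFun J y with hzdef
  have hzQ : z ∈ Q := (hz 0).1
  have hzF : ∀ n, z - x ∈ t n • F := fun n => (GenProjAux.mem_singleton_add _ _).1 (hz n).2
  -- conclude
  refine ⟨z, hzQ, (GenProjAux.mem_singleton_add _ _).2 ?_⟩
  have htlim : Filter.Tendsto t Filter.atTop (nhds T) := by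
    have h2 : Filter.Tendsto (fun n : ℕ => 1 / ((n:ℝ) + 1)) Filter.atTop (nhds 0) :=
      tendsto_one_div_add_atTop_nhds_zero_nat
    show Filter.Tendsto (fun n : ℕ => T + 1 / ((n:ℝ) + 1)) Filter.atTop (nhds T)
    simpa using (tendsto_const_nhds.add h2)
  rcases eq_or_lt_of_le hTnn with hT0 | hT0
  · -- T = 0 : z = x
    obtain ⟨R, hR0, hRF⟩ := hFb.exists_pos_norm_le
    have hnorm : ∀ n, ‖z - x‖ ≤ t n * R := by
      intro n
      obtain ⟨f, hf, hzf⟩ := hzF n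
      rw [← hzf, norm_smul, Real.norm_of_nonneg (hTnn.trans (htpos n).le)]
      exact mul_le_mul_of_nonneg_left (hRF f hf) (hTnn.trans (htpos n).le)
    have hzx : z = x := by
      have h1 : Filter.Tendsto (fun n => t n * R) Filter.atTop (nhds (T * R)) :=
        htlim.mul_const R
      rw [← hT0] at h1
      simp only [zero_mul] at h1
      have h2 : ‖z - x‖ ≤ 0 := ge_of_tendsto h1 (Filter.Eventually.of_forall hnorm)
      exact sub_eq_zero.1 (norm_le_zero_iff.1 h2)
    rw [← hT0, hzx, sub_self]
    rw [zero_smul_set ⟨0, hF0mem⟩]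
    exact Set.zero_mem_zero
  · -- T > 0
    have hmem : ∀ n, (t n)⁻¹ • (z - x) ∈ F := by
      intro n
      obtain ⟨f, hf, hzf⟩ := hzF n
      have htn : t n ≠ 0 := (hTnn.trans_lt (htpos n)).ne'
      rw [← hzf, smul_smul, inv_mul_cancel₀ htn, one_smul]
      exact hf
    have hlim : Filter.Tendsto (fun n => (t n)⁻¹ • (z - x)) Filter.atTop
        (nhds (T⁻¹ • (z - x))) :=
      (htlim.inv₀ hT0.ne').smul_const _
    have hTF : T⁻¹ • (z - x) ∈ F :=
      hFc.mem_of_tendsto hlim (Filter.Eventually.of_forall hmem)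
    exact ⟨T⁻¹ • (z - x), hTF, show T • (T⁻¹ • (z - x)) = z - x by
      rw [smul_smul, mul_inv_cancel₀ hT0.ne', one_smul]⟩
end

section
/- Let X be a real Hilbert space and let Ω, Ω_1, …, Ω_n (n ≥ 2) be nonempty closed subsets of X. Let x̄ ∈ Ω be a local optimal solution of the distance version of the generalized Heron problem, and suppose that x̄ ∉ Ω_i and Π(x̄;Ω_i) ≠ ∅ for every i = 1, …, n. Then for every choice of projections ω_i ∈ Π(x̄;Ω_i), i = 1, …, n, one has −Σ_{i=1}^n (x̄ − ω_i)/d(x̄;Ω_i) ∈ N̂(x̄;Ω). -/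
open Set Metric
open scoped RealInnerProductSpace

/-- The Fréchet (regular) normal cone to `Ω` at `x̄ ∈ Ω`:
`v ∈ N̂(x̄;Ω)` iff for every `ε > 0` there is `δ > 0` such that
`⟨v, x − x̄⟩ ≤ ε‖x − x̄‖` for all `x ∈ Ω` with `‖x − x̄‖ < δ`. -/
def frechetNormalCone {X : Type*} [NormedAddCommGroup X] [InnerProductSpace ℝ X]
    (Ω : Set X) (xbar : X) : Set X :=
  {v | ∀ ε > (0 : ℝ), ∃ δ > (0 : ℝ), ∀ x ∈ Ω, ‖x - xbar‖ < δ →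
    ⟪v, x - xbar⟫ ≤ ε * ‖x - xbar‖}

/-- The set of metric projections of `x` onto `Q`. -/
def projSet {X : Type*} [NormedAddCommGroup X] (Q : Set X) (x : X) : Set X :=
  {ω ∈ Q | ‖x - ω‖ = infDist x Q}

lemma key_norm_upper {X : Type*} [NormedAddCommGroup X] [InnerProductSpace ℝ X]
    (a h : X) (ha : 0 < ‖a‖) :
    ‖a + h‖ ≤ ‖a‖ + ⟪a, h⟫ / ‖a‖ + ‖h‖ ^ 2 / ‖a‖ := by
  have h1 : ‖a + h‖ ^ 2 = ‖a‖ ^ 2 + 2 * ⟪a, h⟫ + ‖h‖ ^ 2 := norm_add_sq_real a h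
  have hcs : |⟪a, h⟫| ≤ ‖a‖ * ‖h‖ := abs_real_inner_le_norm a h
  have hcs' : -(‖a‖ * ‖h‖) ≤ ⟪a, h⟫ := neg_le_of_abs_le hcs
  have hmul : ‖a + h‖ * ‖a‖ ≤ ‖a‖ ^ 2 + ⟪a, h⟫ + ‖h‖ ^ 2 := by
    nlinarith [sq_nonneg (⟪a, h⟫ + ‖h‖ ^ 2), sq_nonneg (‖a‖ - ‖h‖),
      norm_nonneg (a + h), norm_nonneg h, sq_nonneg (‖a‖ * ‖h‖),
      mul_nonneg (norm_nonneg (a + h)) (norm_nonneg a)]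
  have : ‖a + h‖ ≤ (‖a‖ ^ 2 + ⟪a, h⟫ + ‖h‖ ^ 2) / ‖a‖ := (le_div_iff₀ ha).mpr hmul
  calc ‖a + h‖ ≤ (‖a‖ ^ 2 + ⟪a, h⟫ + ‖h‖ ^ 2) / ‖a‖ := this
    _ = ‖a‖ + ⟪a, h⟫ / ‖a‖ + ‖h‖ ^ 2 / ‖a‖ := by field_simp

/-- Necessary optimality condition for the generalized Heron problem in a Hilbert
space when the local solution `x̄` lies outside all the target sets: for any choice
of projections `ωᵢ ∈ Π(x̄;Ωᵢ)` one has `−Σᵢ (x̄−ωᵢ)/d(x̄;Ωᵢ) ∈ N̂(x̄;Ω)`. -/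
theorem heron_necessary_hilbert
    {X : Type*} [NormedAddCommGroup X] [InnerProductSpace ℝ X] [CompleteSpace X]
    (n : ℕ) (hn : 2 ≤ n)
    (Ω : Set X) (hΩne : Ω.Nonempty) (hΩc : IsClosed Ω)
    (Ωi : Fin n → Set X) (hΩine : ∀ i, (Ωi i).Nonempty) (hΩic : ∀ i, IsClosed (Ωi i))
    (xbar : X) (hxbar : xbar ∈ Ω)
    (hloc : ∃ δ > (0 : ℝ), ∀ x ∈ Ω, ‖x - xbar‖ < δ →
      ∑ i, infDist xbar (Ωi i) ≤ ∑ i, infDist x (Ωi i))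
    (hout : ∀ i, xbar ∉ Ωi i)
    (hproj : ∀ i, (projSet (Ωi i) xbar).Nonempty)
    (ω : Fin n → X) (hω : ∀ i, ω i ∈ projSet (Ωi i) xbar) :
    -∑ i, (infDist xbar (Ωi i))⁻¹ • (xbar - ω i) ∈ frechetNormalCone Ω xbar := by
  obtain ⟨δ₀, hδ₀, hopt⟩ := hloc
  have hωΩ : ∀ i, ω i ∈ Ωi i := fun i => (hω i).1
  have hdeq : ∀ i, ‖xbar - ω i‖ = infDist xbar (Ωi i) := fun i => (hω i).2
  have hdpos : ∀ i, 0 < infDist xbar (Ωi i) := by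
    intro i
    rw [← hdeq i]
    have hne : xbar ≠ ω i := fun h => hout i (h ▸ hωΩ i)
    simpa [sub_eq_zero] using hne
  intro ε hε
  set K : ℝ := ∑ i, (infDist xbar (Ωi i))⁻¹ with hK
  haveI : Nonempty (Fin n) := ⟨⟨0, by omega⟩⟩
  have hKpos : 0 < K :=
    Finset.sum_pos (fun i _ => inv_pos.mpr (hdpos i)) Finset.univ_nonempty
  refine ⟨min δ₀ (ε / K), lt_min hδ₀ (div_pos hε hKpos), ?_⟩
  intro x hx hxδ
  have hxδ₀ : ‖x - xbar‖ < δ₀ := lt_of_lt_of_le hxδ (min_le_left _ _)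
  have hxK : ‖x - xbar‖ * K ≤ ε := by
    have h2 := lt_of_lt_of_le hxδ (min_le_right _ _)
    rw [lt_div_iff₀ hKpos] at h2
    linarith
  have hsum := hopt x hx hxδ₀
  have hper : ∀ i ∈ Finset.univ,
      infDist x (Ωi i) - infDist xbar (Ωi i) - ‖x - xbar‖ ^ 2 * (infDist xbar (Ωi i))⁻¹
        ≤ ⟪(infDist xbar (Ωi i))⁻¹ • (xbar - ω i), x - xbar⟫ := by
    intro i _
    have h1 : infDist x (Ωi i) ≤ ‖x - ω i‖ := by
      rw [← dist_eq_norm]; exact infDist_le_dist_of_mem (hωΩ i)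
    have h2 := key_norm_upper (xbar - ω i) (x - xbar) (by rw [hdeq i]; exact hdpos i)
    have h3 : (xbar - ω i) + (x - xbar) = x - ω i := by abel
    rw [h3, hdeq i] at h2
    rw [real_inner_smul_left]
    have hd := hdpos i
    have h4 : infDist x (Ωi i) ≤ infDist xbar (Ωi i)
        + ⟪xbar - ω i, x - xbar⟫ / infDist xbar (Ωi i)
        + ‖x - xbar‖ ^ 2 / infDist xbar (Ωi i) := le_trans h1 h2
    rw [div_eq_inv_mul, div_eq_inv_mul] at h4
    nlinarith [h4]
  have hsum2 := Finset.sum_le_sum hper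
  have hlhs : ∑ i, (infDist x (Ωi i) - infDist xbar (Ωi i)
      - ‖x - xbar‖ ^ 2 * (infDist xbar (Ωi i))⁻¹)
      = ∑ i, infDist x (Ωi i) - ∑ i, infDist xbar (Ωi i) - ‖x - xbar‖ ^ 2 * K := by
    rw [hK, Finset.mul_sum]
    rw [Finset.sum_sub_distrib, Finset.sum_sub_distrib]
  have hinner : ⟪-∑ i, (infDist xbar (Ωi i))⁻¹ • (xbar - ω i), x - xbar⟫
      = -∑ i, ⟪(infDist xbar (Ωi i))⁻¹ • (xbar - ω i), x - xbar⟫ := by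
    rw [inner_neg_left, sum_inner]
  rw [hinner]
  rw [hlhs] at hsum2
  have hfin : ‖x - xbar‖ ^ 2 * K ≤ ε * ‖x - xbar‖ := by
    nlinarith [norm_nonneg (x - xbar), hxK]
  linarith
end

section
/- Let X be a real Hilbert space and let Ω_1, …, Ω_n (n ≥ 2) be nonempty closed subsets of X with ∩_{i=1}^n Ω_i = ∅. Let x̄ be a local optimal solution of the unconstrained problem: minimize Σ_{i=1}^n d(x;Ω_i) over x ∈ X, and assume that x̄ ∉ Ω_i and Π(x̄;Ω_i) ≠ ∅ for every i = 1, …, n. Then the projection set Π(x̄;Ω_i) is a singleton for every i = 1, …, n. -/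
open Set Metric
open scoped RealInnerProductSpace

private lemma hasFDerivAt_norm_ne' {X : Type*} [NormedAddCommGroup X]
    [InnerProductSpace ℝ X] {x : X} (hx : x ≠ 0) :
    HasFDerivAt (fun y : X => ‖y‖) (‖x‖⁻¹ • innerSL ℝ x) x := by
  have hx0 : (0:ℝ) < ‖x‖ := norm_pos_iff.mpr hx
  have h1 := (hasStrictFDerivAt_norm_sq x).hasFDerivAt
  have hsq : ‖x‖ ^ 2 ≠ 0 := by positivity
  have h2 := (Real.hasDerivAt_sqrt hsq).comp_hasFDerivAt x h1
  convert h2 using 1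
  · rfl
  · rfl
  · funext y; simp [Function.comp, Real.sqrt_sq (norm_nonneg y)]
  · ext y
    simp only [ContinuousLinearMap.smul_apply, innerSL_apply_apply, smul_eq_mul,
      Real.sqrt_sq (norm_nonneg x), ContinuousLinearMap.coe_smul', Pi.smul_apply,
      nsmul_eq_mul, Nat.cast_ofNat]
    field_simp

private lemma grad_sum_zero {X : Type*} [NormedAddCommGroup X] [InnerProductSpace ℝ X]
    (n : ℕ) (Ωi : Fin n → Set X) (hΩine : ∀ i, (Ωi i).Nonempty)
    (xbar : X)
    (hloc : ∃ δ > (0 : ℝ), ∀ x : X, ‖x - xbar‖ < δ →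
      ∑ i, infDist xbar (Ωi i) ≤ ∑ i, infDist x (Ωi i))
    (hout : ∀ i, xbar ∉ Ωi i)
    (ω : Fin n → X) (hω : ∀ i, ω i ∈ projSet (Ωi i) xbar) :
    ∑ i, ‖xbar - ω i‖⁻¹ • (xbar - ω i) = 0 := by
  have hne : ∀ i, xbar - ω i ≠ 0 := fun i => by
    intro h
    have : xbar = ω i := by rwa [sub_eq_zero] at h
    exact hout i (this ▸ (hω i).1)
  -- local min of smooth majorant
  have hmin : IsLocalMin (fun x : X => ∑ i, ‖x - ω i‖) xbar := by
    obtain ⟨δ, hδ, hd⟩ := hloc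
    filter_upwards [Metric.ball_mem_nhds xbar hδ] with x hx
    have h1 : ∑ i, ‖xbar - ω i‖ = ∑ i, infDist xbar (Ωi i) :=
      Finset.sum_congr rfl fun i _ => (hω i).2
    have h2 : ∑ i, infDist x (Ωi i) ≤ ∑ i, ‖x - ω i‖ :=
      Finset.sum_le_sum fun i _ => by
        simpa [dist_eq_norm] using infDist_le_dist_of_mem (x := x) (hω i).1
    have h3 := hd x (by simpa [dist_eq_norm] using mem_ball_iff_norm.mp hx)
    calc ∑ i, ‖xbar - ω i‖ = ∑ i, infDist xbar (Ωi i) := h1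
      _ ≤ ∑ i, infDist x (Ωi i) := h3
      _ ≤ ∑ i, ‖x - ω i‖ := h2
  have hderiv : HasFDerivAt (fun x : X => ∑ i, ‖x - ω i‖)
      (∑ i, ‖xbar - ω i‖⁻¹ • innerSL ℝ (xbar - ω i)) xbar := by
    apply HasFDerivAt.fun_sum
    intro i _
    have h := (hasFDerivAt_norm_ne' (hne i)).comp xbar
      ((hasFDerivAt_id xbar).sub_const (ω i))
    simpa [Function.comp_def] using h
  have hF : (∑ i, ‖xbar - ω i‖⁻¹ • innerSL ℝ (xbar - ω i)) = 0 :=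
    hmin.hasFDerivAt_eq_zero hderiv
  set v := ∑ i, ‖xbar - ω i‖⁻¹ • (xbar - ω i) with hv
  have happ : (∑ i, ‖xbar - ω i‖⁻¹ • innerSL ℝ (xbar - ω i)) v = ⟪v, v⟫ := by
    rw [ContinuousLinearMap.sum_apply]
    rw [hv, sum_inner]
    refine Finset.sum_congr rfl fun i _ => ?_
    rw [ContinuousLinearMap.smul_apply, innerSL_apply_apply, real_inner_smul_left, smul_eq_mul]
  rw [hF] at happ
  have : ⟪v, v⟫ = 0 := by simpa using happ.symm
  exact inner_self_eq_zero.mp this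

/-- Projection uniqueness at local optimal solutions of the (unconstrained)
generalized Fermat–Torricelli problem in a Hilbert space: if the sets `Ωᵢ` have
empty intersection, `x̄` is a local minimizer of `Σᵢ d(·;Ωᵢ)`, `x̄ ∉ Ωᵢ` and
`Π(x̄;Ωᵢ) ≠ ∅` for all `i`, then each `Π(x̄;Ωᵢ)` is a singleton. -/
theorem fermatTorricelli_projection_unique
    {X : Type*} [NormedAddCommGroup X] [InnerProductSpace ℝ X] [CompleteSpace X]
    (n : ℕ) (hn : 2 ≤ n)
    (Ωi : Fin n → Set X) (hΩine : ∀ i, (Ωi i).Nonempty) (hΩic : ∀ i, IsClosed (Ωi i))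
    (hinter : ⋂ i, Ωi i = ∅)
    (xbar : X)
    (hloc : ∃ δ > (0 : ℝ), ∀ x : X, ‖x - xbar‖ < δ →
      ∑ i, infDist xbar (Ωi i) ≤ ∑ i, infDist x (Ωi i))
    (hout : ∀ i, xbar ∉ Ωi i)
    (hproj : ∀ i, (projSet (Ωi i) xbar).Nonempty) :
    ∀ i, ∃ ω, projSet (Ωi i) xbar = {ω} := by
  intro j
  obtain ⟨w, hw⟩ := hproj j
  refine ⟨w, ?_⟩
  ext a
  simp only [Set.mem_singleton_iff]
  constructor
  · intro ha
    -- two selections differing only at j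
    have key : ∀ b ∈ projSet (Ωi j) xbar,
        ∑ i, ‖xbar - (Function.update (fun i => (hproj i).choose) j b) i‖⁻¹ •
          (xbar - (Function.update (fun i => (hproj i).choose) j b) i) = 0 := by
      intro b hb
      apply grad_sum_zero n Ωi hΩine xbar hloc hout
      intro i
      by_cases hij : i = j
      · subst hij; simpa using hb
      · simp only [Function.update_of_ne hij]
        exact (hproj i).choose_spec
    have h1 := key a ha
    have h2 := key w hw
    -- subtract: only the j-th term differs
    have hdiff : ‖xbar - a‖⁻¹ • (xbar - a) = ‖xbar - w‖⁻¹ • (xbar - w) := by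
      have hsub := sub_eq_zero.mpr (h1.trans h2.symm)
      rw [← Finset.sum_sub_distrib] at hsub
      have hzero : ∀ i ∈ Finset.univ, i ≠ j →
          (‖xbar - (Function.update (fun i => (hproj i).choose) j a) i‖⁻¹ •
            (xbar - (Function.update (fun i => (hproj i).choose) j a) i) -
           ‖xbar - (Function.update (fun i => (hproj i).choose) j w) i‖⁻¹ •
            (xbar - (Function.update (fun i => (hproj i).choose) j w) i)) = 0 := by
        intro i _ hij
        simp [Function.update_of_ne hij]
      have := Finset.sum_eq_single_of_mem j (Finset.mem_univ j) hzero ▸ hsub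
      rw [Finset.sum_eq_single_of_mem j (Finset.mem_univ j) hzero] at hsub
      simp only [Function.update_self] at hsub
      exact sub_eq_zero.mp hsub
    -- norms are equal and positive
    have hd : (0:ℝ) < infDist xbar (Ωi j) :=
      ((hΩic j).notMem_iff_infDist_pos (hΩine j)).mp (hout j)
    have hna : ‖xbar - a‖ = infDist xbar (Ωi j) := ha.2
    have hnw : ‖xbar - w‖ = infDist xbar (Ωi j) := hw.2
    rw [hna, hnw] at hdiff
    have := smul_right_injective X (by positivity : (infDist xbar (Ωi j))⁻¹ ≠ 0) hdiff
    exact sub_right_injective this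
  · rintro rfl; exact hw
end

section
/- Let X be a real Hilbert space and let Ω_1, Ω_2, Ω_3 be nonempty closed pairwise disjoint subsets of X. Let x̄ be a local optimal solution of the unconstrained problem: minimize Σ_{i=1}^3 d(x;Ω_i) over x ∈ X, and suppose that x̄ ∈ Ω_1 and Π(x̄;Ω_i) ≠ ∅ for i = 2, 3. Then for any choice of projections ω_i ∈ Π(x̄;Ω_i), i = 2, 3, the unit vectors a_i := (x̄ − ω_i)/d(x̄;Ω_i) satisfy ⟨a_2, a_3⟩ ≤ −1/2 and −a_2 − a_3 ∈ N̂(x̄;Ω_1). -/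
open Set Metric
open scoped RealInnerProductSpace

private lemma sqrt_bound {d : ℝ} (hd : 0 < d) (r B : ℝ)
    (h : r ^ 2 = d ^ 2 + B) : r ≤ d + B / (2 * d) := by
  have h2 : r - d ≤ B / (2 * d) := by
    rw [le_div_iff₀ (by positivity)]
    nlinarith [sq_nonneg (r - d)]
  linarith

private lemma proj_estimate {X : Type*} [NormedAddCommGroup X] [InnerProductSpace ℝ X]
    {d : ℝ} (hd : 0 < d) (w a u : X) (hw : ‖w‖ = d) (ha : a = d⁻¹ • w) :
    ‖w + u‖ ≤ d + ⟪a, u⟫ + ‖u‖ ^ 2 / (2 * d) := by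
  have hinner : ⟪w, u⟫ = d * ⟪a, u⟫ := by
    rw [ha, real_inner_smul_left]
    field_simp
  have hsq : ‖w + u‖ ^ 2 = d ^ 2 + (2 * d * ⟪a, u⟫ + ‖u‖ ^ 2) := by
    rw [norm_add_sq_real, hw, hinner]; ring
  have h1 := sqrt_bound hd ‖w + u‖ _ hsq
  have h2 : (2 * d * ⟪a, u⟫ + ‖u‖ ^ 2) / (2 * d) = ⟪a, u⟫ + ‖u‖ ^ 2 / (2 * d) := by
    field_simp
  linarith [h2 ▸ h1]

set_option maxHeartbeats 1000000 in
/-- Necessary optimality conditions for the generalized Fermat–Torricelli problem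
with three pairwise disjoint nonconvex sets in a Hilbert space, in the case where
the local solution `x̄` belongs to `Ω₁`: the unit vectors
`aᵢ = (x̄ − ωᵢ)/d(x̄;Ωᵢ)`, `i = 2,3`, satisfy `⟨a₂,a₃⟩ ≤ −1/2` and
`−a₂ − a₃ ∈ N̂(x̄;Ω₁)`. -/
theorem fermatTorricelli_three_sets_in_case
    {X : Type*} [NormedAddCommGroup X] [InnerProductSpace ℝ X] [CompleteSpace X]
    (Ω1 Ω2 Ω3 : Set X)
    (h1ne : Ω1.Nonempty) (h2ne : Ω2.Nonempty) (h3ne : Ω3.Nonempty)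
    (h1c : IsClosed Ω1) (h2c : IsClosed Ω2) (h3c : IsClosed Ω3)
    (h12 : Ω1 ∩ Ω2 = ∅) (h13 : Ω1 ∩ Ω3 = ∅) (h23 : Ω2 ∩ Ω3 = ∅)
    (xbar : X)
    (hloc : ∃ δ > (0 : ℝ), ∀ x : X, ‖x - xbar‖ < δ →
      infDist xbar Ω1 + infDist xbar Ω2 + infDist xbar Ω3 ≤
        infDist x Ω1 + infDist x Ω2 + infDist x Ω3)
    (hin : xbar ∈ Ω1)
    (ω2 : X) (hω2 : ω2 ∈ projSet Ω2 xbar) (ω3 : X) (hω3 : ω3 ∈ projSet Ω3 xbar)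
    (a2 a3 : X)
    (ha2 : a2 = (infDist xbar Ω2)⁻¹ • (xbar - ω2))
    (ha3 : a3 = (infDist xbar Ω3)⁻¹ • (xbar - ω3)) :
    ⟪a2, a3⟫ ≤ -(1 / 2 : ℝ) ∧ -a2 - a3 ∈ frechetNormalCone Ω1 xbar := by
  obtain ⟨hω2Ω, hω2d⟩ := hω2
  obtain ⟨hω3Ω, hω3d⟩ := hω3
  set d2 := infDist xbar Ω2 with hd2def
  set d3 := infDist xbar Ω3 with hd3def
  clear_value d2 d3
  have hx2 : xbar ∉ Ω2 := by
    intro h; exact absurd (mem_inter hin h) (by rw [h12]; exact notMem_empty _)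
  have hx3 : xbar ∉ Ω3 := by
    intro h; exact absurd (mem_inter hin h) (by rw [h13]; exact notMem_empty _)
  have hd2 : 0 < d2 := hd2def ▸ (h2c.notMem_iff_infDist_pos h2ne).1 hx2
  have hd3 : 0 < d3 := hd3def ▸ (h3c.notMem_iff_infDist_pos h3ne).1 hx3
  have hna2 : ‖a2‖ = 1 := by
    rw [ha2, norm_smul, hω2d, Real.norm_eq_abs, abs_of_pos (inv_pos.2 hd2)]
    field_simp
  have hna3 : ‖a3‖ = 1 := by
    rw [ha3, norm_smul, hω3d, Real.norm_eq_abs, abs_of_pos (inv_pos.2 hd3)]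
    field_simp
  have key2 : ∀ x : X, infDist x Ω2 ≤ d2 + ⟪a2, x - xbar⟫ + ‖x - xbar‖ ^ 2 / (2 * d2) := by
    intro x
    have h := proj_estimate hd2 (xbar - ω2) a2 (x - xbar) hω2d ha2
    have he : (xbar - ω2) + (x - xbar) = x - ω2 := by abel
    rw [he] at h
    calc infDist x Ω2 ≤ dist x ω2 := infDist_le_dist_of_mem hω2Ω
      _ = ‖x - ω2‖ := dist_eq_norm _ _
      _ ≤ _ := h
  have key3 : ∀ x : X, infDist x Ω3 ≤ d3 + ⟪a3, x - xbar⟫ + ‖x - xbar‖ ^ 2 / (2 * d3) := by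
    intro x
    have h := proj_estimate hd3 (xbar - ω3) a3 (x - xbar) hω3d ha3
    have he : (xbar - ω3) + (x - xbar) = x - ω3 := by abel
    rw [he] at h
    calc infDist x Ω3 ≤ dist x ω3 := infDist_le_dist_of_mem hω3Ω
      _ = ‖x - ω3‖ := dist_eq_norm _ _
      _ ≤ _ := h
  have hzero : infDist xbar Ω1 = 0 := infDist_zero_of_mem hin
  obtain ⟨δ, hδ, hmin⟩ := hloc
  set C : ℝ := 1 / (2 * d2) + 1 / (2 * d3) with hCdef
  have hC : 0 < C := by positivity
  clear_value C
  set s : ℝ := ‖a2 + a3‖ with hsdef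
  have hs_nonneg : 0 ≤ s := hsdef ▸ norm_nonneg _
  have hs_sq : s ^ 2 = 2 + 2 * ⟪a2, a3⟫ := by
    rw [hsdef, norm_add_sq_real, hna2, hna3]; ring
  have hsum : ⟪a2, a2 + a3⟫ + ⟪a3, a2 + a3⟫ = s ^ 2 := by
    rw [← inner_add_left, hsdef, real_inner_self_eq_norm_sq]
  clear_value s
  -- Part A: s ≤ 1
  have hs1 : s ≤ 1 := by
    rcases eq_or_lt_of_le hs_nonneg with h0 | hspos
    · rw [← h0]; norm_num
    have hsq_le : s ^ 2 ≤ s := by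
      apply le_of_forall_pos_le_add
      intro ε hε
      set t : ℝ := min (δ / (2 * s)) (ε / (C * s ^ 2 + 1)) with htdef
      have ht : 0 < t := lt_min (by positivity) (by positivity)
      set x : X := xbar - t • (a2 + a3) with hxdef
      have hxsub : x - xbar = (-t) • (a2 + a3) := by
        rw [hxdef, neg_smul]; abel
      have hxnorm : ‖x - xbar‖ = t * s := by
        rw [hxsub, norm_smul, Real.norm_eq_abs, abs_neg, abs_of_pos ht, ← hsdef]
      have hxδ : ‖x - xbar‖ < δ := by
        rw [hxnorm]
        have : t ≤ δ / (2 * s) := min_le_left _ _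
        have h2 : t * (2 * s) ≤ δ := (le_div_iff₀ (by positivity)).1 this
        nlinarith [mul_pos ht hspos]
      have hmx := hmin x hxδ
      have hi2 : ⟪a2, x - xbar⟫ = -t * ⟪a2, a2 + a3⟫ := by
        rw [hxsub, real_inner_smul_right]
      have hi3 : ⟪a3, x - xbar⟫ = -t * ⟪a3, a2 + a3⟫ := by
        rw [hxsub, real_inner_smul_right]
      have hk2 := key2 x
      have hk3 := key3 x
      have hk1 : infDist x Ω1 ≤ t * s := by
        calc infDist x Ω1 ≤ dist x xbar := infDist_le_dist_of_mem hin
          _ = ‖x - xbar‖ := dist_eq_norm _ _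
          _ = t * s := hxnorm
      rw [hi2, hxnorm] at hk2
      rw [hi3, hxnorm] at hk3
      -- from hmx: 0 ≤ t*s - t*s^2 + t^2*s^2*C
      have hmain : t * s ^ 2 ≤ t * s + t ^ 2 * s ^ 2 * C := by
        have hCsum : (t * s) ^ 2 / (2 * d2) + (t * s) ^ 2 / (2 * d3) = t ^ 2 * s ^ 2 * C := by
          rw [hCdef]; field_simp
        have e : -t * ⟪a2, a2 + a3⟫ + -t * ⟪a3, a2 + a3⟫ = -(t * s ^ 2) := by
          linear_combination (-t) * hsum
        linarith [hmx, hk1, hk2, hk3, e, hCsum]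
      have hdiv : s ^ 2 ≤ s + t * s ^ 2 * C := by
        nlinarith [hmain, ht]
      have htε : t * s ^ 2 * C ≤ ε := by
        have h1 : t ≤ ε / (C * s ^ 2 + 1) := min_le_right _ _
        have h2 : t * (C * s ^ 2 + 1) ≤ ε := by
          rw [← le_div_iff₀ (by positivity)]; exact h1
        nlinarith [h2, ht.le, mul_nonneg ht.le (sq_nonneg s)]
      linarith
    nlinarith
  constructor
  · nlinarith
  -- Part B: Fréchet normal cone
  · intro ε hε
    refine ⟨min δ (ε / C), lt_min hδ (by positivity), ?_⟩
    intro x hxΩ hxlt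
    have hxδ : ‖x - xbar‖ < δ := lt_of_lt_of_le hxlt (min_le_left _ _)
    have hxε : ‖x - xbar‖ < ε / C := lt_of_lt_of_le hxlt (min_le_right _ _)
    have hmx := hmin x hxδ
    have hk1 : infDist x Ω1 = 0 := infDist_zero_of_mem hxΩ
    have hk2 := key2 x
    have hk3 := key3 x
    have hinner : ⟪-a2 - a3, x - xbar⟫ = -⟪a2, x - xbar⟫ - ⟪a3, x - xbar⟫ := by
      rw [inner_sub_left, inner_neg_left]
    rw [hinner]
    have hCn : C * ‖x - xbar‖ ≤ ε := by
      rcases eq_or_lt_of_le (norm_nonneg (x - xbar)) with h0 | hn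
      · rw [← h0]; simp; linarith
      · have : C * ‖x - xbar‖ < C * (ε / C) := by
          exact mul_lt_mul_of_pos_left hxε hC
        rw [mul_div_cancel₀ _ (ne_of_gt hC)] at this
        linarith
    have hCsum : ‖x - xbar‖ ^ 2 / (2 * d2) + ‖x - xbar‖ ^ 2 / (2 * d3)
        = C * ‖x - xbar‖ ^ 2 := by
      rw [hCdef]; field_simp
    have hfin := mul_le_mul_of_nonneg_right hCn (norm_nonneg (x - xbar))
    nlinarith [norm_nonneg (x - xbar), hmx, hk2, hk3, hk1, hzero, hCsum, hfin]
end

section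
/- Let X be a real Hilbert space and let Ω_1, Ω_2, Ω_3 be nonempty closed pairwise disjoint subsets of X. Let x̄ be a local optimal solution of the unconstrained problem: minimize Σ_{i=1}^3 d(x;Ω_i) over x ∈ X, and suppose that x̄ ∉ Ω_i and Π(x̄;Ω_i) ≠ ∅ for i = 1, 2, 3. Then each projection set Π(x̄;Ω_i) is a singleton {ω_i}, and the unit vectors a_i := (x̄ − ω_i)/d(x̄;Ω_i) satisfy ⟨a_i, a_j⟩ = −1/2 whenever i ≠ j, i, j ∈ {1,2,3}. -/
open Set Metric
open scoped RealInnerProductSpace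

/-- Derivative of the distance-to-a-point function away from the point. -/
lemma hasFDerivAt_norm_sub {X : Type*} [NormedAddCommGroup X] [InnerProductSpace ℝ X]
    (ω x : X) (h : x ≠ ω) :
    HasFDerivAt (fun y => ‖y - ω‖) (‖x - ω‖⁻¹ • innerSL ℝ (x - ω)) x := by
  have hne : x - ω ≠ 0 := sub_ne_zero.mpr h
  have hnorm : ‖x - ω‖ ≠ 0 := norm_ne_zero_iff.mpr hne
  have h1 : HasFDerivAt (fun y : X => y - ω) (ContinuousLinearMap.id ℝ X) x :=
    (hasFDerivAt_id x).sub_const ω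
  have h2 := h1.norm_sq
  have hsqne : ‖x - ω‖ ^ 2 ≠ 0 := pow_ne_zero _ hnorm
  have h3 := h2.sqrt hsqne
  have heq : (fun y : X => Real.sqrt (‖y - ω‖ ^ 2)) = fun y : X => ‖y - ω‖ := by
    funext y; exact Real.sqrt_sq (norm_nonneg _)
  rw [heq] at h3
  convert h3 using 1
  rw [Real.sqrt_sq (norm_nonneg _)]
  ext v
  simp [ContinuousLinearMap.smul_apply, real_inner_smul_left]
  ring

/-- Key lemma: for any choice of projections, the unit vectors sum to zero. -/
lemma sum_unit_eq_zero {X : Type*} [NormedAddCommGroup X] [InnerProductSpace ℝ X]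
    {Ω1 Ω2 Ω3 : Set X} {xbar : X}
    (hloc : ∃ δ > (0 : ℝ), ∀ x : X, ‖x - xbar‖ < δ →
      infDist xbar Ω1 + infDist xbar Ω2 + infDist xbar Ω3 ≤
        infDist x Ω1 + infDist x Ω2 + infDist x Ω3)
    (hout1 : xbar ∉ Ω1) (hout2 : xbar ∉ Ω2) (hout3 : xbar ∉ Ω3)
    {ω1 ω2 ω3 : X}
    (h1 : ω1 ∈ projSet Ω1 xbar) (h2 : ω2 ∈ projSet Ω2 xbar) (h3 : ω3 ∈ projSet Ω3 xbar) :
    (infDist xbar Ω1)⁻¹ • (xbar - ω1) + (infDist xbar Ω2)⁻¹ • (xbar - ω2) +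
      (infDist xbar Ω3)⁻¹ • (xbar - ω3) = 0 := by
  obtain ⟨hm1, hd1⟩ := h1
  obtain ⟨hm2, hd2⟩ := h2
  obtain ⟨hm3, hd3⟩ := h3
  have hne1 : xbar ≠ ω1 := fun h => hout1 (h ▸ hm1)
  have hne2 : xbar ≠ ω2 := fun h => hout2 (h ▸ hm2)
  have hne3 : xbar ≠ ω3 := fun h => hout3 (h ▸ hm3)
  -- the surrogate function g
  set g : X → ℝ := fun x => ‖x - ω1‖ + ‖x - ω2‖ + ‖x - ω3‖ with hg
  have hlocg : IsLocalMin g xbar := by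
    obtain ⟨δ, hδ, hδ'⟩ := hloc
    rw [IsLocalMin, IsMinFilter, Metric.eventually_nhds_iff]
    refine ⟨δ, hδ, fun y hy => ?_⟩
    have hy' : ‖y - xbar‖ < δ := by rwa [← dist_eq_norm]
    have hle := hδ' y hy'
    have e1 : infDist y Ω1 ≤ ‖y - ω1‖ := by
      rw [← dist_eq_norm]; exact infDist_le_dist_of_mem hm1
    have e2 : infDist y Ω2 ≤ ‖y - ω2‖ := by
      rw [← dist_eq_norm]; exact infDist_le_dist_of_mem hm2
    have e3 : infDist y Ω3 ≤ ‖y - ω3‖ := by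
      rw [← dist_eq_norm]; exact infDist_le_dist_of_mem hm3
    have : g xbar = infDist xbar Ω1 + infDist xbar Ω2 + infDist xbar Ω3 := by
      simp [hg, hd1, hd2, hd3]
    rw [this]
    calc infDist xbar Ω1 + infDist xbar Ω2 + infDist xbar Ω3
        ≤ infDist y Ω1 + infDist y Ω2 + infDist y Ω3 := hle
      _ ≤ g y := by simp only [hg]; linarith
  -- derivative of g
  have hD : HasFDerivAt g
      (‖xbar - ω1‖⁻¹ • innerSL ℝ (xbar - ω1) + ‖xbar - ω2‖⁻¹ • innerSL ℝ (xbar - ω2) +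
        ‖xbar - ω3‖⁻¹ • innerSL ℝ (xbar - ω3)) xbar :=
    ((hasFDerivAt_norm_sub ω1 xbar hne1).add (hasFDerivAt_norm_sub ω2 xbar hne2)).add
      (hasFDerivAt_norm_sub ω3 xbar hne3)
  have hzero := hlocg.hasFDerivAt_eq_zero hD
  set s : X := (infDist xbar Ω1)⁻¹ • (xbar - ω1) + (infDist xbar Ω2)⁻¹ • (xbar - ω2) +
      (infDist xbar Ω3)⁻¹ • (xbar - ω3) with hs
  have hinner : ∀ v : X, ⟪s, v⟫ = 0 := by
    intro v
    have := congrFun (congrArg DFunLike.coe hzero) v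
    simp only [ContinuousLinearMap.add_apply, ContinuousLinearMap.smul_apply,
      innerSL_apply_apply, ContinuousLinearMap.zero_apply, smul_eq_mul] at this
    rw [hd1, hd2, hd3] at this
    simp only [hs, inner_add_left, real_inner_smul_left]
    linarith
  have := hinner s
  rwa [inner_self_eq_zero] at this

/-- Necessary optimality conditions for the generalized Fermat–Torricelli problem
with three pairwise disjoint nonconvex sets in a Hilbert space, in the case where
the local solution `x̄` lies outside all three sets: each projection set is a
singleton `{ωᵢ}`, and the unit vectors `aᵢ = (x̄ − ωᵢ)/d(x̄;Ωᵢ)` satisfy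
`⟨aᵢ,aⱼ⟩ = −1/2` for `i ≠ j`. -/
theorem fermatTorricelli_three_sets_out_case
    {X : Type*} [NormedAddCommGroup X] [InnerProductSpace ℝ X] [CompleteSpace X]
    (Ω1 Ω2 Ω3 : Set X)
    (h1ne : Ω1.Nonempty) (h2ne : Ω2.Nonempty) (h3ne : Ω3.Nonempty)
    (h1c : IsClosed Ω1) (h2c : IsClosed Ω2) (h3c : IsClosed Ω3)
    (h12 : Ω1 ∩ Ω2 = ∅) (h13 : Ω1 ∩ Ω3 = ∅) (h23 : Ω2 ∩ Ω3 = ∅)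
    (xbar : X)
    (hloc : ∃ δ > (0 : ℝ), ∀ x : X, ‖x - xbar‖ < δ →
      infDist xbar Ω1 + infDist xbar Ω2 + infDist xbar Ω3 ≤
        infDist x Ω1 + infDist x Ω2 + infDist x Ω3)
    (hout1 : xbar ∉ Ω1) (hout2 : xbar ∉ Ω2) (hout3 : xbar ∉ Ω3)
    (hproj1 : (projSet Ω1 xbar).Nonempty) (hproj2 : (projSet Ω2 xbar).Nonempty)
    (hproj3 : (projSet Ω3 xbar).Nonempty) :
    ∃ ω1 ω2 ω3 : X,
      projSet Ω1 xbar = {ω1} ∧ projSet Ω2 xbar = {ω2} ∧ projSet Ω3 xbar = {ω3} ∧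
      ⟪(infDist xbar Ω1)⁻¹ • (xbar - ω1), (infDist xbar Ω2)⁻¹ • (xbar - ω2)⟫ = -(1 / 2 : ℝ) ∧
      ⟪(infDist xbar Ω1)⁻¹ • (xbar - ω1), (infDist xbar Ω3)⁻¹ • (xbar - ω3)⟫ = -(1 / 2 : ℝ) ∧
      ⟪(infDist xbar Ω2)⁻¹ • (xbar - ω2), (infDist xbar Ω3)⁻¹ • (xbar - ω3)⟫ = -(1 / 2 : ℝ) := by
  obtain ⟨ω1, h1⟩ := hproj1
  obtain ⟨ω2, h2⟩ := hproj2
  obtain ⟨ω3, h3⟩ := hproj3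
  have hdp1 : 0 < infDist xbar Ω1 := (h1c.notMem_iff_infDist_pos h1ne).mp hout1
  have hdp2 : 0 < infDist xbar Ω2 := (h2c.notMem_iff_infDist_pos h2ne).mp hout2
  have hdp3 : 0 < infDist xbar Ω3 := (h3c.notMem_iff_infDist_pos h3ne).mp hout3
  set d1 := infDist xbar Ω1
  set d2 := infDist xbar Ω2
  set d3 := infDist xbar Ω3
  set a1 : X := d1⁻¹ • (xbar - ω1) with ha1
  set a2 : X := d2⁻¹ • (xbar - ω2) with ha2
  set a3 : X := d3⁻¹ • (xbar - ω3) with ha3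
  have hsum : a1 + a2 + a3 = 0 := sum_unit_eq_zero hloc hout1 hout2 hout3 h1 h2 h3
  -- uniqueness helpers
  have huniq1 : projSet Ω1 xbar = {ω1} := by
    apply Set.eq_singleton_iff_unique_mem.mpr
    refine ⟨h1, fun ω' h' => ?_⟩
    have hsum' := sum_unit_eq_zero hloc hout1 hout2 hout3 h' h2 h3
    have : d1⁻¹ • (xbar - ω') = a1 := by
      rw [ha1]
      have := hsum
      rw [← hsum'] at this
      abel_nf at this ⊢
      linear_combination (norm := module) -this
    have h2' : xbar - ω' = xbar - ω1 := by
      have := congrArg (fun v => d1 • v) this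
      simpa [smul_smul, mul_inv_cancel₀ hdp1.ne', ha1] using this
    exact sub_right_injective h2'
  have huniq2 : projSet Ω2 xbar = {ω2} := by
    apply Set.eq_singleton_iff_unique_mem.mpr
    refine ⟨h2, fun ω' h' => ?_⟩
    have hsum' := sum_unit_eq_zero hloc hout1 hout2 hout3 h1 h' h3
    have : d2⁻¹ • (xbar - ω') = a2 := by
      rw [ha2]
      have := hsum
      rw [← hsum'] at this
      abel_nf at this ⊢
      linear_combination (norm := module) -this
    have h2' : xbar - ω' = xbar - ω2 := by
      have := congrArg (fun v => d2 • v) this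
      simpa [smul_smul, mul_inv_cancel₀ hdp2.ne', ha2] using this
    exact sub_right_injective h2'
  have huniq3 : projSet Ω3 xbar = {ω3} := by
    apply Set.eq_singleton_iff_unique_mem.mpr
    refine ⟨h3, fun ω' h' => ?_⟩
    have hsum' := sum_unit_eq_zero hloc hout1 hout2 hout3 h1 h2 h'
    have : d3⁻¹ • (xbar - ω') = a3 := by
      rw [ha3]
      have := hsum
      rw [← hsum'] at this
      abel_nf at this ⊢
      linear_combination (norm := module) -this
    have h2' : xbar - ω' = xbar - ω3 := by
      have := congrArg (fun v => d3 • v) this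
      simpa [smul_smul, mul_inv_cancel₀ hdp3.ne', ha3] using this
    exact sub_right_injective h2'
  -- unit norms
  have hn1 : ‖a1‖ = 1 := by
    rw [ha1, norm_smul, norm_inv, Real.norm_of_nonneg hdp1.le, h1.2]
    exact inv_mul_cancel₀ hdp1.ne'
  have hn2 : ‖a2‖ = 1 := by
    rw [ha2, norm_smul, norm_inv, Real.norm_of_nonneg hdp2.le, h2.2]
    exact inv_mul_cancel₀ hdp2.ne'
  have hn3 : ‖a3‖ = 1 := by
    rw [ha3, norm_smul, norm_inv, Real.norm_of_nonneg hdp3.le, h3.2]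
    exact inv_mul_cancel₀ hdp3.ne'
  have hi1 : ⟪a1, a1⟫ = 1 := by rw [real_inner_self_eq_norm_sq, hn1]; norm_num
  have hi2 : ⟪a2, a2⟫ = 1 := by rw [real_inner_self_eq_norm_sq, hn2]; norm_num
  have hi3 : ⟪a3, a3⟫ = 1 := by rw [real_inner_self_eq_norm_sq, hn3]; norm_num
  have key : ∀ (u v w : X), u + v + w = 0 → ⟪u, u⟫ = 1 → ⟪v, v⟫ = 1 → ⟪w, w⟫ = 1 →
      ⟪u, v⟫ = -(1 / 2 : ℝ) := by
    intro u v w hsum hu hv hw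
    have hw' : w = -(u + v) := by linear_combination (norm := module) hsum
    have : ⟪u + v, u + v⟫ = 1 := by rw [← inner_neg_neg, ← hw']; exact hw
    rw [inner_add_add_self] at this
    have hcomm : ⟪v, u⟫ = ⟪u, v⟫ := real_inner_comm u v
    linarith
  refine ⟨ω1, ω2, ω3, huniq1, huniq2, huniq3, key a1 a2 a3 hsum hi1 hi2 hi3, ?_, ?_⟩
  · exact key a1 a3 a2 (by linear_combination (norm := module) hsum) hi1 hi3 hi2
  · exact key a2 a3 a1 (by linear_combination (norm := module) hsum) hi2 hi3 hi1
end

section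
/- Let X be a real Hilbert space and let Ω_1, Ω_2, Ω_3 be nonempty closed convex pairwise disjoint subsets of X, and let x̄ ∈ X. For each i with x̄ ∉ Ω_i let a_i := (x̄ − P(x̄;Ω_i))/d(x̄;Ω_i), where P(x̄;Ω_i) is the unique metric projection of x̄ onto Ω_i. Suppose that either (a) x̄ ∈ Ω_1, ⟨a_2, a_3⟩ ≤ −1/2 and −a_2 − a_3 ∈ N(x̄;Ω_1), or (b) x̄ ∉ Ω_i for i = 1, 2, 3 and ⟨a_i, a_j⟩ = −1/2 for all i ≠ j. Then x̄ is a global optimal solution of the unconstrained problem: minimize Σ_{i=1}^3 d(x;Ω_i) over x ∈ X. -/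
open Set Metric
open scoped RealInnerProductSpace



lemma le_infDist' {X : Type*} [MetricSpace X] {Ω : Set X} (hne : Ω.Nonempty)
    {b : ℝ} {x : X} (h : ∀ q ∈ Ω, b ≤ dist x q) : b ≤ infDist x Ω := by
  rw [infDist_eq_iInf]
  haveI := hne.to_subtype
  exact le_ciInf fun q => h q q.2

lemma lemA {X : Type*} [NormedAddCommGroup X] [InnerProductSpace ℝ X]
    {Ω : Set X} (hne : Ω.Nonempty) {v xbar : X}
    (hnc : ∀ q ∈ Ω, ⟪v, q - xbar⟫ ≤ 0) (hv : ‖v‖ ≤ 1) (x : X) :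
    ⟪v, x - xbar⟫ ≤ infDist x Ω := by
  apply le_infDist' hne
  intro q hq
  have h1 : ⟪v, x - xbar⟫ ≤ ⟪v, x - q⟫ := by
    have := hnc q hq
    have heq : ⟪v, x - q⟫ - ⟪v, x - xbar⟫ = -⟪v, q - xbar⟫ := by
      rw [← inner_sub_right, ← inner_neg_right]; congr 1; abel
    linarith [hnc q hq]
  have h2 : ⟪v, x - q⟫ ≤ ‖v‖ * ‖x - q‖ := real_inner_le_norm v (x - q)
  have h3 : ‖v‖ * ‖x - q‖ ≤ ‖x - q‖ := by nlinarith [norm_nonneg (x - q)]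
  rw [dist_eq_norm]; linarith

lemma lemNC {X : Type*} [NormedAddCommGroup X] [InnerProductSpace ℝ X]
    {Ω : Set X} (hconv : Convex ℝ Ω) {xbar p : X} (hpΩ : p ∈ Ω)
    (hpd : ‖xbar - p‖ = infDist xbar Ω) :
    ∀ q ∈ Ω, ⟪xbar - p, q - p⟫ ≤ 0 := by
  have hiInf : infDist xbar Ω = ⨅ w : Ω, ‖xbar - w‖ := by
    rw [infDist_eq_iInf]
    exact iInf_congr fun w => dist_eq_norm _ _
  exact (norm_eq_iInf_iff_real_inner_le_zero hconv hpΩ).mp (hpd.trans hiInf)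

lemma lemB {X : Type*} [NormedAddCommGroup X] [InnerProductSpace ℝ X]
    {Ω : Set X} (hne : Ω.Nonempty) (hc : IsClosed Ω) (hconv : Convex ℝ Ω)
    {xbar p a : X} (hpΩ : p ∈ Ω) (hpd : ‖xbar - p‖ = infDist xbar Ω)
    (hx : xbar ∉ Ω) (ha : a = (infDist xbar Ω)⁻¹ • (xbar - p)) :
    ‖a‖ = 1 ∧ ∀ x : X, infDist xbar Ω + ⟪a, x - xbar⟫ ≤ infDist x Ω := by
  set d := infDist xbar Ω with hd
  have hdpos : 0 < d := (hc.notMem_iff_infDist_pos hne).mp hx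
  have hnorm : ‖a‖ = 1 := by
    rw [ha, norm_smul, ← hpd]
    simp [abs_of_pos (inv_pos.mpr hdpos), hpd ▸ hdpos.ne']
  refine ⟨hnorm, fun x => ?_⟩
  apply le_infDist' hne
  intro q hq
  have hnc := lemNC hconv hpΩ hpd q hq
  have h1 : ⟪a, x - q⟫ ≤ ‖x - q‖ := by
    calc ⟪a, x - q⟫ ≤ ‖a‖ * ‖x - q‖ := real_inner_le_norm _ _
    _ = ‖x - q‖ := by rw [hnorm, one_mul]
  have h2 : ⟪a, x - q⟫ = ⟪a, x - xbar⟫ + ⟪a, xbar - p⟫ - ⟪a, q - p⟫ := by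
    rw [← inner_add_right, ← inner_sub_right]; congr 1; abel
  have h3 : ⟪a, xbar - p⟫ = d := by
    rw [ha, real_inner_smul_left, real_inner_self_eq_norm_sq, hpd]
    field_simp
  have h4 : ⟪a, q - p⟫ ≤ 0 := by
    rw [ha, real_inner_smul_left]
    exact mul_nonpos_of_nonneg_of_nonpos (inv_nonneg.mpr hdpos.le) hnc
  rw [dist_eq_norm]
  linarith


/-- The normal cone of convex analysis to a convex set `C` at `x̄ ∈ C`. -/
def convexNormalCone {X : Type*} [NormedAddCommGroup X] [InnerProductSpace ℝ X]
    (C : Set X) (xbar : X) : Set X :=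
  {v | ∀ x ∈ C, ⟪v, x - xbar⟫ ≤ 0}

/-- Sufficient optimality conditions for the generalized Fermat–Torricelli problem
with three pairwise disjoint closed convex sets in a Hilbert space: if either
(a) `x̄ ∈ Ω₁`, `⟨a₂,a₃⟩ ≤ −1/2` and `−a₂ − a₃ ∈ N(x̄;Ω₁)`, or
(b) `x̄ ∉ Ωᵢ` for all `i` and `⟨aᵢ,aⱼ⟩ = −1/2` for all `i ≠ j`,
where `aᵢ = (x̄ − P(x̄;Ωᵢ))/d(x̄;Ωᵢ)`, then `x̄` is a global minimizer of
`Σᵢ d(·;Ωᵢ)` over `X`. -/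
theorem fermatTorricelli_three_sets_sufficient
    {X : Type*} [NormedAddCommGroup X] [InnerProductSpace ℝ X] [CompleteSpace X]
    (Ω1 Ω2 Ω3 : Set X)
    (h1ne : Ω1.Nonempty) (h2ne : Ω2.Nonempty) (h3ne : Ω3.Nonempty)
    (h1c : IsClosed Ω1) (h2c : IsClosed Ω2) (h3c : IsClosed Ω3)
    (h1conv : Convex ℝ Ω1) (h2conv : Convex ℝ Ω2) (h3conv : Convex ℝ Ω3)
    (h12 : Ω1 ∩ Ω2 = ∅) (h13 : Ω1 ∩ Ω3 = ∅) (h23 : Ω2 ∩ Ω3 = ∅)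
    (xbar : X)
    (p1 p2 p3 : X)
    (hp1 : p1 ∈ Ω1 ∧ ‖xbar - p1‖ = infDist xbar Ω1)
    (hp2 : p2 ∈ Ω2 ∧ ‖xbar - p2‖ = infDist xbar Ω2)
    (hp3 : p3 ∈ Ω3 ∧ ‖xbar - p3‖ = infDist xbar Ω3)
    (a1 a2 a3 : X)
    (ha1 : a1 = (infDist xbar Ω1)⁻¹ • (xbar - p1))
    (ha2 : a2 = (infDist xbar Ω2)⁻¹ • (xbar - p2))
    (ha3 : a3 = (infDist xbar Ω3)⁻¹ • (xbar - p3))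
    (hcase :
      (xbar ∈ Ω1 ∧ ⟪a2, a3⟫ ≤ -(1 / 2 : ℝ) ∧ -a2 - a3 ∈ convexNormalCone Ω1 xbar) ∨
      (xbar ∉ Ω1 ∧ xbar ∉ Ω2 ∧ xbar ∉ Ω3 ∧
        ⟪a1, a2⟫ = -(1 / 2 : ℝ) ∧ ⟪a1, a3⟫ = -(1 / 2 : ℝ) ∧ ⟪a2, a3⟫ = -(1 / 2 : ℝ))) :
    ∀ x : X, infDist xbar Ω1 + infDist xbar Ω2 + infDist xbar Ω3 ≤
      infDist x Ω1 + infDist x Ω2 + infDist x Ω3 := by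
  intro x
  obtain ⟨hp1Ω, hp1d⟩ := hp1
  obtain ⟨hp2Ω, hp2d⟩ := hp2
  obtain ⟨hp3Ω, hp3d⟩ := hp3
  rcases hcase with ⟨hx1, hi23, hnc⟩ | ⟨hx1, hx2, hx3, hi12, hi13, hi23⟩
  · -- case (a)
    have hx2 : xbar ∉ Ω2 := fun h =>
      (Set.eq_empty_iff_forall_notMem.mp h12 xbar) ⟨hx1, h⟩
    have hx3 : xbar ∉ Ω3 := fun h =>
      (Set.eq_empty_iff_forall_notMem.mp h13 xbar) ⟨hx1, h⟩
    have hd1 : infDist xbar Ω1 = 0 := infDist_zero_of_mem hx1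
    obtain ⟨hn2, hb2⟩ := lemB h2ne h2c h2conv hp2Ω hp2d hx2 ha2
    obtain ⟨hn3, hb3⟩ := lemB h3ne h3c h3conv hp3Ω hp3d hx3 ha3
    have hvle : ‖-a2 - a3‖ ≤ 1 := by
      have hsq : ‖-a2 - a3‖ = ‖a2 + a3‖ := by
        rw [show -a2 - a3 = -(a2 + a3) by abel, norm_neg]
      have hexp : ‖a2 + a3‖ ^ 2 = ‖a2‖ ^ 2 + 2 * ⟪a2, a3⟫ + ‖a3‖ ^ 2 :=
        norm_add_sq_real a2 a3
      nlinarith [norm_nonneg (a2 + a3), norm_nonneg (-a2 - a3)]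
    have hA := lemA h1ne hnc hvle x
    have hiv : ⟪-a2 - a3, x - xbar⟫ = -⟪a2, x - xbar⟫ - ⟪a3, x - xbar⟫ := by
      rw [inner_sub_left, inner_neg_left]
    linarith [hb2 x, hb3 x]
  · -- case (b)
    obtain ⟨hn1, hb1⟩ := lemB h1ne h1c h1conv hp1Ω hp1d hx1 ha1
    obtain ⟨hn2, hb2⟩ := lemB h2ne h2c h2conv hp2Ω hp2d hx2 ha2
    obtain ⟨hn3, hb3⟩ := lemB h3ne h3c h3conv hp3Ω hp3d hx3 ha3
    have hz : a1 + a2 + a3 = 0 := by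
      have hsq : ‖a1 + a2 + a3‖ ^ 2 = 0 := by
        rw [← real_inner_self_eq_norm_sq]
        simp only [inner_add_left, inner_add_right]
        have c12 : ⟪a2, a1⟫ = ⟪a1, a2⟫ := real_inner_comm _ _
        have c13 : ⟪a3, a1⟫ = ⟪a1, a3⟫ := real_inner_comm _ _
        have c23 : ⟪a3, a2⟫ = ⟪a2, a3⟫ := real_inner_comm _ _
        have n1 : ⟪a1, a1⟫ = 1 := by
          rw [real_inner_self_eq_norm_sq, hn1]; norm_num
        have n2 : ⟪a2, a2⟫ = 1 := by
          rw [real_inner_self_eq_norm_sq, hn2]; norm_num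
        have n3 : ⟪a3, a3⟫ = 1 := by
          rw [real_inner_self_eq_norm_sq, hn3]; norm_num
        rw [c12, c13, c23, n1, n2, n3, hi12, hi13, hi23]; ring
      have := sq_eq_zero_iff.mp hsq
      exact norm_eq_zero.mp this
    have hsum : ⟪a1, x - xbar⟫ + ⟪a2, x - xbar⟫ + ⟪a3, x - xbar⟫ = 0 := by
      have : ⟪a1 + a2 + a3, x - xbar⟫ = 0 := by rw [hz]; simp
      rw [inner_add_left, inner_add_left] at this
      linarith
    linarith [hb1 x, hb2 x, hb3 x]
end

section
/- Let X be a real Hilbert space and let Ω, Ω_1, …, Ω_n (n ≥ 2) be nonempty closed subsets of X with Ω ∩ Ω_i = ∅ for all i. Let x̄ ∈ Ω be a local optimal solution of the distance version of the generalized Heron problem with Π(x̄;Ω_i) ≠ ∅ for all i, and suppose that Ω admits a tangent space at x̄, i.e., there is a linear subspace L of X with L^⊥ = N̂(x̄;Ω). Then for every choice of projections ω_i ∈ Π(x̄;Ω_i) the unit vectors a_i := (x̄ − ω_i)/d(x̄;Ω_i) satisfy Σ_{i=1}^n cos(a_i, v) = 0 for every v ∈ L \ {0}. -/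
open Set Metric
open scoped RealInnerProductSpace

/-- `cos(u,v) = ⟨u,v⟩/(‖u‖·‖v‖)` for nonzero vectors. -/
noncomputable def rcos {X : Type*} [NormedAddCommGroup X] [InnerProductSpace ℝ X]
    (u v : X) : ℝ :=
  ⟪u, v⟫ / (‖u‖ * ‖v‖)

lemma key_ineq {X : Type*} [NormedAddCommGroup X] [InnerProductSpace ℝ X]
    (a h : X) (ε : ℝ) (hH : ‖h‖ ≤ 2*ε*‖a‖) :
    ‖a‖ * (‖a + h‖ - ‖a‖) ≤ ⟪a, h⟫ + ε*‖a‖*‖h‖ := by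
  have hsq : ‖a + h‖^2 = ‖a‖^2 + 2*⟪a,h⟫ + ‖h‖^2 := by
    rw [norm_add_sq_real]
  nlinarith [sq_nonneg (‖a+h‖ - ‖a‖), norm_nonneg h, norm_nonneg a, norm_nonneg (a+h)]

/-- Necessary optimality condition for the generalized Heron problem in a Hilbert
space when the constraint set `Ω` admits a tangent space `L` at the local solution
`x̄` (i.e. `L^⊥ = N̂(x̄;Ω)`): `Σᵢ cos(aᵢ, v) = 0` for every nonzero `v ∈ L`, where
`aᵢ = (x̄ − ωᵢ)/d(x̄;Ωᵢ)` for arbitrary projections `ωᵢ ∈ Π(x̄;Ωᵢ)`. -/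
theorem heron_tangent_space_necessary
    {X : Type*} [NormedAddCommGroup X] [InnerProductSpace ℝ X] [CompleteSpace X]
    (n : ℕ) (hn : 2 ≤ n)
    (Ω : Set X) (hΩne : Ω.Nonempty) (hΩc : IsClosed Ω)
    (Ωi : Fin n → Set X) (hΩine : ∀ i, (Ωi i).Nonempty) (hΩic : ∀ i, IsClosed (Ωi i))
    (hdisj : ∀ i, Ω ∩ Ωi i = ∅)
    (xbar : X) (hxbar : xbar ∈ Ω)
    (hloc : ∃ δ > (0 : ℝ), ∀ x ∈ Ω, ‖x - xbar‖ < δ →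
      ∑ i, infDist xbar (Ωi i) ≤ ∑ i, infDist x (Ωi i))
    (hproj : ∀ i, (projSet (Ωi i) xbar).Nonempty)
    (L : Submodule ℝ X)
    (hL : {v : X | ∀ u ∈ L, ⟪v, u⟫ = 0} = frechetNormalCone Ω xbar)
    (ω : Fin n → X) (hω : ∀ i, ω i ∈ projSet (Ωi i) xbar) :
    ∀ v ∈ L, v ≠ 0 →
      ∑ i, rcos ((infDist xbar (Ωi i))⁻¹ • (xbar - ω i)) v = 0 := by

  intro v hvL hv0
  have hd0 : ∀ i, 0 < infDist xbar (Ωi i) := by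
    intro i
    refine ((hΩic i).notMem_iff_infDist_pos (hΩine i)).1 ?_
    intro hmem
    have : xbar ∈ Ω ∩ Ωi i := ⟨hxbar, hmem⟩
    simp [hdisj i] at this
  have hdω : ∀ i, ‖xbar - ω i‖ = infDist xbar (Ωi i) := fun i => (hω i).2
  set a : Fin n → X := fun i => (infDist xbar (Ωi i))⁻¹ • (xbar - ω i) with ha
  have hna : ∀ i, ‖a i‖ = 1 := by
    intro i
    rw [ha]
    simp only [norm_smul, Real.norm_eq_abs, abs_inv, abs_of_pos (hd0 i), hdω i]
    exact inv_mul_cancel₀ (ne_of_gt (hd0 i))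
  have hnpos : (0:ℝ) < n := by positivity
  -- the negative of the sum of unit vectors lies in the Fréchet normal cone
  have hcone : (-(∑ i, a i)) ∈ frechetNormalCone Ω xbar := by
    intro ε hε
    obtain ⟨δ₀, hδ₀, hopt⟩ := hloc
    have hε' : 0 < ε / n := by positivity
    have hne : (Finset.univ : Finset (Fin n)).Nonempty := by
      refine ⟨⟨0, by omega⟩, Finset.mem_univ _⟩
    set m : ℝ := Finset.univ.inf' hne (fun i => infDist xbar (Ωi i)) with hm
    have hm0 : 0 < m := by
      rw [hm, Finset.lt_inf'_iff]
      intro i _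
      exact hd0 i
    refine ⟨min δ₀ (2 * (ε/n) * m), by positivity, ?_⟩
    intro x hx hxd
    set h : X := x - xbar with hh
    have hkey : ∀ i, infDist x (Ωi i) - infDist xbar (Ωi i) ≤ ⟪a i, h⟫ + (ε/n) * ‖h‖ := by
      intro i
      have hHi : ‖h‖ ≤ 2 * (ε/n) * ‖xbar - ω i‖ := by
        have h1 : ‖h‖ ≤ 2 * (ε/n) * m := le_of_lt (lt_of_lt_of_le hxd (min_le_right _ _))
        have h2 : m ≤ infDist xbar (Ωi i) := Finset.inf'_le _ (Finset.mem_univ i)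
        rw [hdω i]
        nlinarith
      have := key_ineq (xbar - ω i) h (ε/n) hHi
      have hsum : (xbar - ω i) + h = x - ω i := by rw [hh]; abel
      rw [hsum] at this
      have hle : infDist x (Ωi i) ≤ ‖x - ω i‖ := by
        have := infDist_le_dist_of_mem (s := Ωi i) (x := x) (hω i).1
        rwa [dist_eq_norm] at this
      have hinner : ⟪a i, h⟫ = (infDist xbar (Ωi i))⁻¹ * ⟪xbar - ω i, h⟫ := by
        rw [ha]; exact real_inner_smul_left _ _ _
      have hd := hd0 i
      rw [hdω i] at this
      rw [hinner]
      have h3 : infDist xbar (Ωi i) * (infDist x (Ωi i) - infDist xbar (Ωi i)) ≤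
          ⟪xbar - ω i, h⟫ + (ε/n) * infDist xbar (Ωi i) * ‖h‖ := by
        nlinarith
      have h4 : infDist x (Ωi i) - infDist xbar (Ωi i) ≤
          (⟪xbar - ω i, h⟫ + (ε/n) * infDist xbar (Ωi i) * ‖h‖) / infDist xbar (Ωi i) := by
        rw [le_div_iff₀ hd]
        nlinarith
      calc infDist x (Ωi i) - infDist xbar (Ωi i) ≤
          (⟪xbar - ω i, h⟫ + (ε/n) * infDist xbar (Ωi i) * ‖h‖) / infDist xbar (Ωi i) := h4
        _ = (infDist xbar (Ωi i))⁻¹ * ⟪xbar - ω i, h⟫ + (ε/n) * ‖h‖ := by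
            field_simp
    have hopt' : (0:ℝ) ≤ ∑ i, (infDist x (Ωi i) - infDist xbar (Ωi i)) := by
      rw [Finset.sum_sub_distrib]
      have := hopt x hx (lt_of_lt_of_le hxd (min_le_left _ _))
      linarith
    have hsum2 : ∑ i, (infDist x (Ωi i) - infDist xbar (Ωi i)) ≤
        ⟪∑ i, a i, h⟫ + ε * ‖h‖ := by
      have h1 : ∑ i, (infDist x (Ωi i) - infDist xbar (Ωi i)) ≤
          ∑ i, (⟪a i, h⟫ + (ε/n) * ‖h‖) := Finset.sum_le_sum (fun i _ => hkey i)
      have h2 : ∑ i, (⟪a i, h⟫ + (ε/n) * ‖h‖) = ⟪∑ i, a i, h⟫ + ε * ‖h‖ := by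
        rw [Finset.sum_add_distrib, sum_inner, Finset.sum_const, Finset.card_univ,
          Fintype.card_fin, nsmul_eq_mul]
        field_simp
      linarith
    have : ⟪-(∑ i, a i), h⟫ = -⟪∑ i, a i, h⟫ := inner_neg_left _ _
    rw [hh] at this ⊢
    rw [this]
    have := hsum2
    rw [hh] at this
    linarith [hopt', this]
  -- transfer through hL to orthogonality with L
  have horth : ∀ u ∈ L, ⟪-(∑ i, a i), u⟫ = 0 := by
    have : (-(∑ i, a i)) ∈ {v : X | ∀ u ∈ L, ⟪v, u⟫ = 0} := by
      rw [hL]; exact hcone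
    exact this
  have hz : ⟪∑ i, a i, v⟫ = 0 := by
    have := horth v hvL
    rw [inner_neg_left] at this
    linarith
  calc ∑ i, rcos (a i) v = ∑ i, ⟪a i, v⟫ / ‖v‖ := by
        refine Finset.sum_congr rfl (fun i _ => ?_)
        rw [rcos, hna i, one_mul]
    _ = (∑ i, ⟪a i, v⟫) / ‖v‖ := by rw [Finset.sum_div]
    _ = ⟪∑ i, a i, v⟫ / ‖v‖ := by rw [sum_inner]
    _ = 0 := by rw [hz, zero_div]
end

section
/- Let X be a real Hilbert space, let Ω, Ω_1, …, Ω_n (n ≥ 2) be nonempty closed convex subsets of X with Ω ∩ Ω_i = ∅ for all i, let x̄ ∈ Ω, and suppose that Ω admits a tangent space at x̄, i.e., there is a linear subspace L of X with L^⊥ = N(x̄;Ω). Let a_i := (x̄ − P(x̄;Ω_i))/d(x̄;Ω_i), where P(x̄;Ω_i) denotes the unique metric projection of x̄ onto Ω_i. Then x̄ is a global optimal solution of the distance version of the generalized Heron problem if and only if Σ_{i=1}^n cos(a_i, v) = 0 for every v ∈ L \ {0}. -/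
open Set Metric
open scoped RealInnerProductSpace

set_option maxHeartbeats 1600000 in
/-- Characterization of optimal solutions to the generalized Heron problem with
convex data in a Hilbert space when the constraint set `Ω` admits a tangent space
`L` at `x̄` (i.e. `L^⊥ = N(x̄;Ω)`): `x̄` is a global optimal solution iff
`Σᵢ cos(aᵢ, v) = 0` for every nonzero `v ∈ L`, where
`aᵢ = (x̄ − P(x̄;Ωᵢ))/d(x̄;Ωᵢ)`. -/
theorem heron_tangent_space_characterization
    {X : Type*} [NormedAddCommGroup X] [InnerProductSpace ℝ X] [CompleteSpace X]
    (n : ℕ) (hn : 2 ≤ n)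
    (Ω : Set X) (hΩne : Ω.Nonempty) (hΩc : IsClosed Ω) (hΩconv : Convex ℝ Ω)
    (Ωi : Fin n → Set X) (hΩine : ∀ i, (Ωi i).Nonempty) (hΩic : ∀ i, IsClosed (Ωi i))
    (hΩiconv : ∀ i, Convex ℝ (Ωi i))
    (hdisj : ∀ i, Ω ∩ Ωi i = ∅)
    (xbar : X) (hxbar : xbar ∈ Ω)
    (L : Submodule ℝ X)
    (hL : {v : X | ∀ u ∈ L, ⟪v, u⟫ = 0} = convexNormalCone Ω xbar)
    (p : Fin n → X) (hp : ∀ i, p i ∈ Ωi i ∧ ‖xbar - p i‖ = infDist xbar (Ωi i))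
    (a : Fin n → X) (ha : ∀ i, a i = (infDist xbar (Ωi i))⁻¹ • (xbar - p i)) :
    (∀ x ∈ Ω, ∑ i, infDist xbar (Ωi i) ≤ ∑ i, infDist x (Ωi i)) ↔
      ∀ v ∈ L, v ≠ 0 → ∑ i, rcos (a i) v = 0 := by
  classical
  set d : Fin n → ℝ := fun i => infDist xbar (Ωi i) with hddef
  have hd : ∀ i, 0 < d i := by
    intro i
    have hx : xbar ∉ Ωi i := fun h =>
      (Set.eq_empty_iff_forall_notMem.mp (hdisj i) xbar) ⟨hxbar, h⟩
    exact ((hΩic i).notMem_iff_infDist_pos (hΩine i)).1 hx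
  have hna : ∀ i, ‖a i‖ = 1 := by
    intro i
    rw [ha i, norm_smul, (hp i).2, Real.norm_eq_abs, abs_of_pos (inv_pos.2 (hd i))]
    exact inv_mul_cancel₀ (hd i).ne'
  -- the projection variational inequality
  have hproj : ∀ i, ∀ q ∈ Ωi i, ⟪xbar - p i, q - p i⟫ ≤ 0 := by
    intro i
    refine (norm_eq_iInf_iff_real_inner_le_zero (hΩiconv i) (hp i).1).1 ?_
    rw [(hp i).2]
    show infDist xbar (Ωi i) = _
    rw [infDist_eq_iInf]
    exact congrArg _ (funext fun y => dist_eq_norm _ _)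
  have hinner : ∀ i, ⟪a i, xbar - p i⟫ = d i := by
    intro i
    have e : d i = infDist xbar (Ωi i) := rfl
    rw [ha i, real_inner_smul_left, real_inner_self_eq_norm_sq, (hp i).2, ← e, sq,
      inv_mul_cancel_left₀ (hd i).ne']
  set s : X := ∑ i, a i with hsdef
  -- lower estimate for the distance functions
  have hlow : ∀ x : X, ∀ i, d i + ⟪a i, x - xbar⟫ ≤ infDist x (Ωi i) := by
    intro x i
    rw [infDist_eq_iInf]
    haveI : Nonempty (Ωi i) := (hΩine i).to_subtype
    refine le_ciInf fun q => ?_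
    obtain ⟨q, hq⟩ := q
    have h1 : ⟪a i, x - q⟫ ≤ ‖x - q‖ := by
      have h := real_inner_le_norm (a i) (x - q)
      rwa [hna i, one_mul] at h
    have h2 : ⟪a i, x - q⟫ = ⟪a i, x - xbar⟫ + ⟪a i, xbar - p i⟫ + ⟪a i, p i - q⟫ := by
      rw [show x - q = (x - xbar) + ((xbar - p i) + (p i - q)) by abel,
        inner_add_right, inner_add_right]
      ring
    have h3 : 0 ≤ ⟪a i, p i - q⟫ := by
      rw [ha i, real_inner_smul_left,
        show p i - q = -(q - p i) by abel, inner_neg_right]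
      have := hproj i q hq
      have h4 : (0:ℝ) ≤ (d i)⁻¹ := (inv_pos.2 (hd i)).le
      nlinarith
    rw [dist_eq_norm]
    linarith [h1, h2, h3, hinner i]
  -- upper estimate for the distance functions along a ray
  have hup : ∀ (w : X) (t : ℝ), 0 ≤ t → ∀ i,
      infDist (xbar + t • w) (Ωi i) ≤ d i + t * ⟪a i, w⟫ + t^2 * ‖w‖^2 / (2 * d i) := by
    intro w t ht i
    have h1 : infDist (xbar + t • w) (Ωi i) ≤ ‖(xbar - p i) + t • w‖ := by
      have h := infDist_le_dist_of_mem (x := xbar + t • w) (hp i).1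
      rwa [dist_eq_norm, show xbar + t • w - p i = (xbar - p i) + t • w by abel] at h
    refine h1.trans ?_
    set u := xbar - p i with hu'
    have hu : ‖u‖ = d i := (hp i).2
    have hdi := hd i
    have hsq : ‖u + t • w‖^2 = d i ^ 2 + 2*t*⟪u, w⟫ + t^2 * ‖w‖^2 := by
      rw [norm_add_sq_real, real_inner_smul_right, norm_smul, Real.norm_eq_abs,
        mul_pow, sq_abs, hu]
      ring
    have haiw : ⟪a i, w⟫ = (d i)⁻¹ * ⟪u, w⟫ := by rw [ha i, real_inner_smul_left]
    have hcs : |⟪u, w⟫| ≤ d i * ‖w‖ := by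
      have := abs_real_inner_le_norm u w; rwa [hu] at this
    rw [abs_le] at hcs
    have hRform : d i + t * ⟪a i, w⟫ + t^2 * ‖w‖^2 / (2 * d i)
        = (d i ^ 2 + t * ⟪u, w⟫ + t^2 * ‖w‖^2 / 2) / d i := by
      rw [haiw]; field_simp
    have hRpos : 0 ≤ d i + t * ⟪a i, w⟫ + t^2 * ‖w‖^2 / (2 * d i) := by
      rw [hRform]
      apply div_nonneg _ hdi.le
      nlinarith [sq_nonneg (d i - t * ‖w‖)]
    have hL2 : ‖u + t • w‖^2 ≤ (d i + t * ⟪a i, w⟫ + t^2 * ‖w‖^2 / (2 * d i))^2 := by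
      rw [hsq, hRform, div_pow, le_div_iff₀ (by positivity)]
      nlinarith [sq_nonneg (t * ⟪u, w⟫ + t^2 * ‖w‖^2 / 2), sq_nonneg (d i)]
    nlinarith [norm_nonneg (u + t • w), hRpos, hL2]
  -- the two sides are each equivalent to `∀ x ∈ Ω, 0 ≤ ⟪s, x - xbar⟫`
  have key : (∀ x ∈ Ω, ∑ i, d i ≤ ∑ i, infDist x (Ωi i)) ↔ (∀ x ∈ Ω, 0 ≤ ⟪s, x - xbar⟫) := by
    constructor
    · intro hopt x hx
      set w := x - xbar with hw
      set C : ℝ := ‖w‖^2 * ∑ i, (2 * d i)⁻¹ with hC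
      have hC0 : 0 ≤ C :=
        mul_nonneg (sq_nonneg _)
          (Finset.sum_nonneg fun i _ => inv_nonneg.2 (by linarith [hd i]))
      have hkey : ∀ t : ℝ, 0 < t → t ≤ 1 → 0 ≤ ⟪s, w⟫ + t * C := by
        intro t ht0 ht1
        have hmem : xbar + t • w ∈ Ω := by
          have h := hΩconv hxbar hx (by linarith : (0:ℝ) ≤ 1 - t) ht0.le (by ring)
          have e : (1 - t) • xbar + t • x = xbar + t • w := by
            rw [hw, smul_sub, sub_smul, one_smul]; abel
          rwa [e] at h
        have h1 := hopt _ hmem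
        have h2 : ∑ i, infDist (xbar + t • w) (Ωi i)
            ≤ ∑ i, (d i + t * ⟪a i, w⟫ + t^2 * ‖w‖^2 / (2 * d i)) :=
          Finset.sum_le_sum fun i _ => hup w t ht0.le i
        have e1 : ∑ i, (t * ⟪a i, w⟫) = t * ⟪s, w⟫ := by
          rw [← Finset.mul_sum, hsdef, sum_inner]
        have e2 : ∑ i, (t^2 * ‖w‖^2 / (2 * d i)) = t^2 * C := by
          have e3 : t^2 * C = ∑ i, t^2 * (‖w‖^2 * (2 * d i)⁻¹) := by
            rw [hC, Finset.mul_sum, Finset.mul_sum]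
          rw [e3]
          exact Finset.sum_congr rfl fun i _ => by rw [div_eq_mul_inv]; ring
        have h3 : ∑ i, (d i + t * ⟪a i, w⟫ + t^2 * ‖w‖^2 / (2 * d i))
            = ∑ i, d i + t * ⟪s, w⟫ + t^2 * C := by
          rw [Finset.sum_add_distrib, Finset.sum_add_distrib, e1, e2]
        rw [h3] at h2
        have h4 : 0 ≤ t * ⟪s, w⟫ + t^2 * C := by linarith
        nlinarith [h4]
      by_contra hneg
      push_neg at hneg
      set ε : ℝ := -⟪s, w⟫ with hε'
      have hε : 0 < ε := by simp only [hε']; linarith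
      set t : ℝ := min 1 (ε / (2 * (C + 1))) with ht'
      have ht0 : 0 < t := lt_min one_pos (div_pos hε (by linarith))
      have h := hkey t ht0 (min_le_left _ _)
      have htC : t * C ≤ ε / 2 := by
        calc t * C ≤ (ε / (2 * (C + 1))) * C :=
              mul_le_mul_of_nonneg_right (min_le_right _ _) hC0
        _ ≤ ε / 2 := by
              rw [div_mul_eq_mul_div, div_le_div_iff₀ (by linarith) two_pos]
              nlinarith
      have : ⟪s, w⟫ = -ε := by simp [hε']
      linarith
    · intro hnorm x hx
      have h1 : ∀ i, d i + ⟪a i, x - xbar⟫ ≤ infDist x (Ωi i) := fun i => hlow x i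
      have h2 : ∑ i, (d i + ⟪a i, x - xbar⟫) ≤ ∑ i, infDist x (Ωi i) :=
        Finset.sum_le_sum fun i _ => h1 i
      have h3 : ∑ i, (d i + ⟪a i, x - xbar⟫) = ∑ i, d i + ⟪s, x - xbar⟫ := by
        rw [Finset.sum_add_distrib, hsdef, sum_inner]
      rw [h3] at h2
      have := hnorm x hx
      linarith
  have key2 : (∀ x ∈ Ω, 0 ≤ ⟪s, x - xbar⟫) ↔ (∀ v ∈ L, ⟪s, v⟫ = 0) := by
    constructor
    · intro h v hv
      have hmem : -s ∈ convexNormalCone Ω xbar := by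
        intro x hx
        rw [inner_neg_left]
        linarith [h x hx]
      rw [← hL] at hmem
      have := hmem v hv
      rw [inner_neg_left] at this
      linarith
    · intro h
      have hmem : -s ∈ {v : X | ∀ u ∈ L, ⟪v, u⟫ = 0} := by
        intro u hu
        rw [inner_neg_left, h u hu, neg_zero]
      rw [hL] at hmem
      intro x hx
      have := hmem x hx
      rw [inner_neg_left] at this
      linarith
  have key3 : (∀ v ∈ L, ⟪s, v⟫ = 0) ↔ (∀ v ∈ L, v ≠ 0 → ∑ i, rcos (a i) v = 0) := by
    have hsum : ∀ v : X, v ≠ 0 → ∑ i, rcos (a i) v = ⟪s, v⟫ / ‖v‖ := by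
      intro v hv
      rw [hsdef, sum_inner, Finset.sum_div]
      exact Finset.sum_congr rfl fun i _ => by simp [rcos, hna i]
    constructor
    · intro h v hv hv0
      rw [hsum v hv0, h v hv, zero_div]
    · intro h v hv
      by_cases hv0 : v = 0
      · simp [hv0]
      · have := h v hv hv0
        rw [hsum v hv0] at this
        have hn0 : ‖v‖ ≠ 0 := norm_ne_zero_iff.2 hv0
        exact (div_eq_zero_iff.1 this).resolve_right hn0
  exact key.trans (key2.trans key3)
end

section
/- Let X be a real Hilbert space and let Ω, Ω_1, Ω_2 be nonempty closed subsets of X with Ω ∩ Ω_1 = ∅ and Ω ∩ Ω_2 = ∅. Let x̄ ∈ Ω be a local optimal solution of the problem: minimize d(x;Ω_1) + d(x;Ω_2) subject to x ∈ Ω. Suppose that N̂(x̄;Ω) = span{v} for some v ≠ 0 and that Π(x̄;Ω_i) ≠ ∅ for i = 1, 2. Then for any choice of projections ω_i ∈ Π(x̄;Ω_i), the unit vectors a_i := (x̄ − ω_i)/d(x̄;Ω_i) satisfy: either a_1 + a_2 = 0, or cos(a_1, v) = cos(a_2, v). -/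
open Set Metric
open scoped RealInnerProductSpace

lemma key_ineq_s14 {X : Type*} [NormedAddCommGroup X] [InnerProductSpace ℝ X]
    (u h : X) (d : ℝ) (hd : 0 < d) (hu : ‖u‖ = d) :
    ‖u + h‖ - d - ‖h‖ ^ 2 / (2 * d) ≤ d⁻¹ * ⟪u, h⟫ := by
  have hsq : ‖u + h‖ ^ 2 = d ^ 2 + 2 * ⟪u, h⟫ + ‖h‖ ^ 2 := by
    rw [@norm_add_sq_real, hu]
  have h2 : 2 * d * ‖u + h‖ ≤ 2 * d ^ 2 + 2 * ⟪u, h⟫ + ‖h‖ ^ 2 := by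
    nlinarith [sq_nonneg (‖u + h‖ - d)]
  have hd2 : (0:ℝ) < 2 * d := by linarith
  have e1 : ‖h‖ ^ 2 / (2 * d) * (2 * d) = ‖h‖ ^ 2 := div_mul_cancel₀ _ hd2.ne'
  have e2 : d⁻¹ * ⟪u, h⟫ * (2 * d) = 2 * ⟪u, h⟫ := by field_simp
  nlinarith [h2, e1, e2, hd2]

/-- Necessary conditions for the generalized Heron problem with two nonconvex sets
in a Hilbert space when `N̂(x̄;Ω) = span{v}`: either `a₁ + a₂ = 0` or
`cos(a₁,v) = cos(a₂,v)`, where `aᵢ = (x̄ − ωᵢ)/d(x̄;Ωᵢ)`. -/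
theorem heron_two_sets_necessary
    {X : Type*} [NormedAddCommGroup X] [InnerProductSpace ℝ X] [CompleteSpace X]
    (Ω Ω1 Ω2 : Set X)
    (hΩne : Ω.Nonempty) (h1ne : Ω1.Nonempty) (h2ne : Ω2.Nonempty)
    (hΩc : IsClosed Ω) (h1c : IsClosed Ω1) (h2c : IsClosed Ω2)
    (hd1 : Ω ∩ Ω1 = ∅) (hd2 : Ω ∩ Ω2 = ∅)
    (xbar : X) (hxbar : xbar ∈ Ω)
    (hloc : ∃ δ > (0 : ℝ), ∀ x ∈ Ω, ‖x - xbar‖ < δ →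
      infDist xbar Ω1 + infDist xbar Ω2 ≤ infDist x Ω1 + infDist x Ω2)
    (v : X) (hv : v ≠ 0)
    (hN : frechetNormalCone Ω xbar = (Submodule.span ℝ {v} : Set X))
    (hproj1 : (projSet Ω1 xbar).Nonempty) (hproj2 : (projSet Ω2 xbar).Nonempty)
    (ω1 : X) (hω1 : ω1 ∈ projSet Ω1 xbar) (ω2 : X) (hω2 : ω2 ∈ projSet Ω2 xbar)
    (a1 a2 : X)
    (ha1 : a1 = (infDist xbar Ω1)⁻¹ • (xbar - ω1))
    (ha2 : a2 = (infDist xbar Ω2)⁻¹ • (xbar - ω2)) :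
    a1 + a2 = 0 ∨ rcos a1 v = rcos a2 v := by
  set d1 := infDist xbar Ω1 with hd1def
  set d2 := infDist xbar Ω2 with hd2def
  have hx1 : xbar ∉ Ω1 := fun h => by
    have : xbar ∈ Ω ∩ Ω1 := ⟨hxbar, h⟩; rw [hd1] at this; exact this
  have hx2 : xbar ∉ Ω2 := fun h => by
    have : xbar ∈ Ω ∩ Ω2 := ⟨hxbar, h⟩; rw [hd2] at this; exact this
  have hd1pos : 0 < d1 := (h1c.notMem_iff_infDist_pos h1ne).mp hx1
  have hd2pos : 0 < d2 := (h2c.notMem_iff_infDist_pos h2ne).mp hx2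
  have hn1 : ‖xbar - ω1‖ = d1 := hω1.2
  have hn2 : ‖xbar - ω2‖ = d2 := hω2.2
  -- membership of -(a1+a2) in the normal cone
  have hmem : -(a1 + a2) ∈ frechetNormalCone Ω xbar := by
    intro ε hε
    obtain ⟨δ0, hδ0, hopt⟩ := hloc
    set C := (2 * d1)⁻¹ + (2 * d2)⁻¹ with hC
    have hCpos : 0 < C := by positivity
    refine ⟨min δ0 (ε / C), by positivity, fun x hx hxδ => ?_⟩
    have hxδ0 : ‖x - xbar‖ < δ0 := lt_of_lt_of_le hxδ (min_le_left _ _)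
    have hxεC : ‖x - xbar‖ < ε / C := lt_of_lt_of_le hxδ (min_le_right _ _)
    have k1 := key_ineq_s14 (xbar - ω1) (x - xbar) d1 hd1pos hn1
    have k2 := key_ineq_s14 (xbar - ω2) (x - xbar) d2 hd2pos hn2
    have e1 : xbar - ω1 + (x - xbar) = x - ω1 := by abel
    have e2 : xbar - ω2 + (x - xbar) = x - ω2 := by abel
    rw [e1] at k1
    rw [e2] at k2
    have l1 : infDist x Ω1 ≤ ‖x - ω1‖ := by
      rw [← dist_eq_norm]; exact infDist_le_dist_of_mem hω1.1
    have l2 : infDist x Ω2 ≤ ‖x - ω2‖ := by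
      rw [← dist_eq_norm]; exact infDist_le_dist_of_mem hω2.1
    have lopt : d1 + d2 ≤ infDist x Ω1 + infDist x Ω2 := hopt x hx hxδ0
    have hin : ⟪-(a1 + a2), x - xbar⟫ =
        -(d1⁻¹ * ⟪xbar - ω1, x - xbar⟫ + d2⁻¹ * ⟪xbar - ω2, x - xbar⟫) := by
      rw [ha1, ha2, inner_neg_left, inner_add_left, real_inner_smul_left,
        real_inner_smul_left]
    rw [hin]
    have hCb : C * ‖x - xbar‖ ≤ ε := by
      have := (le_div_iff₀ hCpos).mp hxεC.le
      linarith [this]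
    have hsq : ‖x - xbar‖ ^ 2 / (2 * d1) + ‖x - xbar‖ ^ 2 / (2 * d2)
        = (C * ‖x - xbar‖) * ‖x - xbar‖ := by
      rw [hC]; ring
    have hmul := mul_le_mul_of_nonneg_right hCb (norm_nonneg (x - xbar))
    clear_value d1 d2 C
    linarith [hmul, k1, k2, l1, l2, lopt, hsq]
  -- hence a1 + a2 ∈ span {v}
  have hspan : a1 + a2 ∈ Submodule.span ℝ ({v} : Set X) := by
    have : -(a1 + a2) ∈ (Submodule.span ℝ ({v} : Set X) : Set X) := hN ▸ hmem
    exact (Submodule.neg_mem_iff _).mp this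
  obtain ⟨t, ht⟩ := Submodule.mem_span_singleton.mp hspan
  rcases eq_or_ne t 0 with ht0 | ht0
  · left; rw [← ht, ht0, zero_smul]
  · right
    have hna1 : ‖a1‖ = 1 := by
      rw [ha1, norm_smul, hn1, Real.norm_eq_abs, abs_of_pos (by positivity),
        inv_mul_cancel₀ hd1pos.ne']
    have hna2 : ‖a2‖ = 1 := by
      rw [ha2, norm_smul, hn2, Real.norm_eq_abs, abs_of_pos (by positivity),
        inv_mul_cancel₀ hd2pos.ne']
    have hveq : v = t⁻¹ • (a1 + a2) := by rw [← ht, smul_smul, inv_mul_cancel₀ ht0, one_smul]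
    have hi1 : ⟪a1, a1⟫ = 1 := by rw [real_inner_self_eq_norm_sq, hna1]; norm_num
    have hi2 : ⟪a2, a2⟫ = 1 := by rw [real_inner_self_eq_norm_sq, hna2]; norm_num
    have hinn : ⟪a1, v⟫ = ⟪a2, v⟫ := by
      rw [hveq, real_inner_smul_right, real_inner_smul_right, inner_add_right,
        inner_add_right, hi1, hi2, real_inner_comm a2 a1]
      ring
    unfold rcos
    rw [hna1, hna2, hinn]
end

section
/- Let Ω, Ω_1, Ω_2 be nonempty closed convex subsets of the Euclidean plane ℝ² with Ω ∩ Ω_1 = ∅ and Ω ∩ Ω_2 = ∅, let x̄ ∈ Ω, and suppose that N(x̄;Ω) = span{v} for some v ≠ 0. Let a_i := (x̄ − P(x̄;Ω_i))/d(x̄;Ω_i) for i = 1, 2, where P(x̄;Ω_i) is the unique metric projection of x̄ onto Ω_i. If either a_1 + a_2 = 0, or both a_1 ≠ a_2 and cos(a_1, v) = cos(a_2, v), then x̄ is a global optimal solution of the problem: minimize d(x;Ω_1) + d(x;Ω_2) subject to x ∈ Ω. -/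
open Set Metric
open scoped RealInnerProductSpace

/-- In the plane, a vector orthogonal to a nonzero vector `w` lies in the span of any
nonzero `v` orthogonal to `w`. -/
lemma mem_span_of_orthogonal_plane {w v u : EuclideanSpace ℝ (Fin 2)}
    (hw : w ≠ 0) (hv : v ≠ 0) (hvw : ⟪v, w⟫ = 0) (huw : ⟪u, w⟫ = 0) :
    u ∈ Submodule.span ℝ {v} := by
  set K := (Submodule.span ℝ {w})ᗮ with hK
  have hvK : v ∈ K := by
    rw [hK, Submodule.mem_orthogonal_singleton_iff_inner_left]; exact hvw
  have huK : u ∈ K := by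
    rw [hK, Submodule.mem_orthogonal_singleton_iff_inner_left]; exact huw
  have hfinK : Module.finrank ℝ K = 1 := by
    have h := Submodule.finrank_add_finrank_orthogonal (K := Submodule.span ℝ {w}) (𝕜 := ℝ)
    rw [finrank_span_singleton hw, finrank_euclideanSpace_fin, ← hK] at h
    omega
  have hle : Submodule.span ℝ {v} ≤ K := by
    rw [Submodule.span_le]; intro y hy
    simp only [Set.mem_singleton_iff] at hy; subst hy; exact hvK
  have : Submodule.span ℝ {v} = K :=
    Submodule.eq_of_le_of_finrank_eq hle (by rw [finrank_span_singleton hv, hfinK])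
  rw [this]; exact huK

/-- Linear lower bound for the distance function from a projection point. -/
lemma dist_lower_bound {Ω1 : Set (EuclideanSpace ℝ (Fin 2))}
    (h1ne : Ω1.Nonempty) (h1conv : Convex ℝ Ω1)
    {xbar p1 : EuclideanSpace ℝ (Fin 2)}
    (hp1 : p1 ∈ Ω1) (hp1d : ‖xbar - p1‖ = infDist xbar Ω1)
    (hd1pos : 0 < infDist xbar Ω1)
    {a1 : EuclideanSpace ℝ (Fin 2)}
    (ha1 : a1 = (infDist xbar Ω1)⁻¹ • (xbar - p1))
    (x : EuclideanSpace ℝ (Fin 2)) :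
    ⟪a1, x - xbar⟫ + infDist xbar Ω1 ≤ infDist x Ω1 := by
  have hna1 : ‖a1‖ = 1 := by
    rw [ha1, norm_smul, hp1d, Real.norm_eq_abs, abs_inv,
      abs_of_pos hd1pos, inv_mul_cancel₀ hd1pos.ne']
  -- projection inequality
  have hproj : ∀ q ∈ Ω1, ⟪xbar - p1, q - p1⟫ ≤ 0 := by
    have heq : ‖xbar - p1‖ = ⨅ w : Ω1, ‖xbar - w‖ := by
      rw [hp1d, infDist_eq_iInf]
      simp only [dist_eq_norm]
    exact (norm_eq_iInf_iff_real_inner_le_zero h1conv hp1).mp heq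
  have : Nonempty ↥Ω1 := h1ne.to_subtype
  conv_rhs => rw [infDist_eq_iInf]
  refine le_ciInf fun q => ?_
  have hq : (q : EuclideanSpace ℝ (Fin 2)) ∈ Ω1 := q.2
  have h1 : ⟪a1, xbar - (q : EuclideanSpace ℝ (Fin 2))⟫ ≥ infDist xbar Ω1 := by
    rw [ha1, real_inner_smul_left]
    have hexp : ⟪xbar - p1, xbar - (q : EuclideanSpace ℝ (Fin 2))⟫
        = ⟪xbar - p1, xbar - p1⟫ - ⟪xbar - p1, (q : EuclideanSpace ℝ (Fin 2)) - p1⟫ := by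
      rw [← inner_sub_right]; congr 1; abel
    have h2 : ⟪xbar - p1, xbar - (q : EuclideanSpace ℝ (Fin 2))⟫ ≥ (infDist xbar Ω1) ^ 2 := by
      rw [hexp, real_inner_self_eq_norm_sq, hp1d]
      nlinarith [hproj q hq]
    calc infDist xbar Ω1 = (infDist xbar Ω1)⁻¹ * (infDist xbar Ω1) ^ 2 := by
          field_simp
      _ ≤ (infDist xbar Ω1)⁻¹ * ⟪xbar - p1, xbar - (q : EuclideanSpace ℝ (Fin 2))⟫ :=
          mul_le_mul_of_nonneg_left h2 (inv_nonneg.mpr hd1pos.le)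
  have h3 : ⟪a1, x - (q : EuclideanSpace ℝ (Fin 2))⟫
      = ⟪a1, x - xbar⟫ + ⟪a1, xbar - (q : EuclideanSpace ℝ (Fin 2))⟫ := by
    rw [← inner_add_right]; congr 1; abel
  have h4 : ⟪a1, x - (q : EuclideanSpace ℝ (Fin 2))⟫ ≤ dist x q := by
    calc ⟪a1, x - (q : EuclideanSpace ℝ (Fin 2))⟫
        ≤ ‖a1‖ * ‖x - (q : EuclideanSpace ℝ (Fin 2))‖ := real_inner_le_norm _ _
      _ = dist x q := by rw [hna1, one_mul, dist_eq_norm]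
  linarith [h3 ▸ h4]

/-- Sufficient optimality conditions for the generalized Heron problem with two
convex sets in the Euclidean plane: if `N(x̄;Ω) = span{v}` and either `a₁ + a₂ = 0`
or (`a₁ ≠ a₂` and `cos(a₁,v) = cos(a₂,v)`) for `aᵢ = (x̄ − P(x̄;Ωᵢ))/d(x̄;Ωᵢ)`,
then `x̄` is a global optimal solution. -/
theorem heron_two_sets_sufficient_plane
    (Ω Ω1 Ω2 : Set (EuclideanSpace ℝ (Fin 2)))
    (hΩne : Ω.Nonempty) (h1ne : Ω1.Nonempty) (h2ne : Ω2.Nonempty)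
    (hΩc : IsClosed Ω) (h1c : IsClosed Ω1) (h2c : IsClosed Ω2)
    (hΩconv : Convex ℝ Ω) (h1conv : Convex ℝ Ω1) (h2conv : Convex ℝ Ω2)
    (hd1 : Ω ∩ Ω1 = ∅) (hd2 : Ω ∩ Ω2 = ∅)
    (xbar : EuclideanSpace ℝ (Fin 2)) (hxbar : xbar ∈ Ω)
    (v : EuclideanSpace ℝ (Fin 2)) (hv : v ≠ 0)
    (hN : convexNormalCone Ω xbar = (Submodule.span ℝ {v} : Set (EuclideanSpace ℝ (Fin 2))))
    (p1 p2 : EuclideanSpace ℝ (Fin 2))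
    (hp1 : p1 ∈ Ω1 ∧ ‖xbar - p1‖ = infDist xbar Ω1)
    (hp2 : p2 ∈ Ω2 ∧ ‖xbar - p2‖ = infDist xbar Ω2)
    (a1 a2 : EuclideanSpace ℝ (Fin 2))
    (ha1 : a1 = (infDist xbar Ω1)⁻¹ • (xbar - p1))
    (ha2 : a2 = (infDist xbar Ω2)⁻¹ • (xbar - p2))
    (hcase : a1 + a2 = 0 ∨ (a1 ≠ a2 ∧ rcos a1 v = rcos a2 v)) :
    ∀ x ∈ Ω, infDist xbar Ω1 + infDist xbar Ω2 ≤ infDist x Ω1 + infDist x Ω2 := by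
  have hx1 : xbar ∉ Ω1 := fun h => absurd (Set.mem_inter hxbar h) (by simp [hd1])
  have hx2 : xbar ∉ Ω2 := fun h => absurd (Set.mem_inter hxbar h) (by simp [hd2])
  have hd1pos : 0 < infDist xbar Ω1 := (h1c.notMem_iff_infDist_pos h1ne).mp hx1
  have hd2pos : 0 < infDist xbar Ω2 := (h2c.notMem_iff_infDist_pos h2ne).mp hx2
  have hna1 : ‖a1‖ = 1 := by
    rw [ha1, norm_smul, hp1.2, Real.norm_eq_abs, abs_inv,
      abs_of_pos hd1pos, inv_mul_cancel₀ hd1pos.ne']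
  have hna2 : ‖a2‖ = 1 := by
    rw [ha2, norm_smul, hp2.2, Real.norm_eq_abs, abs_inv,
      abs_of_pos hd2pos, inv_mul_cancel₀ hd2pos.ne']
  -- key: ⟪a1 + a2, x - xbar⟫ ≥ 0 for x ∈ Ω
  have hkey : ∀ x ∈ Ω, 0 ≤ ⟪a1 + a2, x - xbar⟫ := by
    rcases hcase with h0 | ⟨hne, hcos⟩
    · intro x _; rw [h0, inner_zero_left]
    · -- a1 + a2 ∈ span {v}
      have hvnorm : ‖v‖ ≠ 0 := norm_ne_zero_iff.mpr hv
      have hinner : ⟪a1, v⟫ = ⟪a2, v⟫ := by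
        have := hcos
        rw [rcos, rcos, hna1, hna2, one_mul] at this
        have h' := congrArg (fun t => t * ‖v‖) this
        simp only [div_mul_cancel₀ _ hvnorm] at h'
        exact h'
      have hw : a1 - a2 ≠ 0 := sub_ne_zero.mpr hne
      have hvw : ⟪v, a1 - a2⟫ = 0 := by
        rw [real_inner_comm, inner_sub_left, hinner, sub_self]
      have huw : ⟪a1 + a2, a1 - a2⟫ = 0 := by
        rw [inner_sub_right, inner_add_left, inner_add_left,
          real_inner_self_eq_norm_sq, real_inner_self_eq_norm_sq, hna1, hna2,
          real_inner_comm a2 a1]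
        ring
      have hmem : a1 + a2 ∈ Submodule.span ℝ {v} :=
        mem_span_of_orthogonal_plane hw hv hvw huw
      have hmemneg : -(a1 + a2) ∈ Submodule.span ℝ {v} := neg_mem hmem
      have : -(a1 + a2) ∈ convexNormalCone Ω xbar := by rw [hN]; exact hmemneg
      intro x hx
      have := this x hx
      rw [inner_neg_left] at this
      linarith
  intro x hx
  have hb1 := dist_lower_bound h1ne h1conv hp1.1 hp1.2 hd1pos ha1 x
  have hb2 := dist_lower_bound h2ne h2conv hp2.1 hp2.2 hd2pos ha2 x
  have hsum : ⟪a1, x - xbar⟫ + ⟪a2, x - xbar⟫ = ⟪a1 + a2, x - xbar⟫ :=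
    (inner_add_left _ _ _).symm
  have := hkey x hx
  linarith
end
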